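/- arXiv:1503.05310 — 8 statements merged into one kernel-verified Lean document; each statement's English description precedes it below -/
import Mathlib

section
/- Suppose h(t,s) ≥ 0 for all t in [σ,τ] and s ≥ 0, and let u be a nonnegative C^2 solution of u'' + c u' + h(t,u) = 0 on [σ,τ]. Then for every ε > 0 with σ + ε ≤ τ - ε, and every t ∈ [σ+ε, τ-ε], one has |u'(t)| ≤ (u(t)/ε) · e^{|c|(τ-σ)}. -/
theorem stmt2 (σ τ c : ℝ) (hστ : σ < τ)
    (h : ℝ → ℝ → ℝ) (hh : Continuous fun p : ℝ × ℝ => h p.1 p.2)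
    (hsign : ∀ t ∈ Set.Icc σ τ, ∀ s, 0 ≤ s → 0 ≤ h t s)
    (u : ℝ → ℝ) (hu : ContDiff ℝ 2 u) (hunn : ∀ t ∈ Set.Icc σ τ, 0 ≤ u t)
    (hode : ∀ t ∈ Set.Icc σ τ, deriv (deriv u) t + c * deriv u t + h t (u t) = 0)
    (ε : ℝ) (hε : 0 < ε) (hεστ : σ + ε ≤ τ - ε) :
    ∀ t ∈ Set.Icc (σ + ε) (τ - ε),
      |deriv u t| ≤ u t / ε * Real.exp (|c| * (τ - σ)) := by
  intro t ht
  obtain ⟨ht1, ht2⟩ := ht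
  have htIcc : t ∈ Set.Icc σ τ := ⟨by linarith, by linarith⟩
  have hdu : Differentiable ℝ u := hu.differentiable (by norm_num)
  have hu1 : ContDiff ℝ 1 (deriv u) := by
    have h' : ContDiff ℝ (1 + 1) u := by exact_mod_cast hu
    exact (contDiff_succ_iff_deriv.mp h').2.2
  have hdu' : Differentiable ℝ (deriv u) := hu1.differentiable one_ne_zero
  have hgderiv : ∀ s, HasDerivAt (fun s => Real.exp (c * s) * deriv u s)
      (Real.exp (c * s) * (deriv (deriv u) s + c * deriv u s)) s := by
    intro s
    have h1 : HasDerivAt (fun s : ℝ => Real.exp (c * s)) (c * Real.exp (c * s)) s := by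
      simpa [mul_comm, Function.comp_def] using
        (Real.hasDerivAt_exp (c * s)).comp s ((hasDerivAt_id s).const_mul c)
    have h2 : HasDerivAt (deriv u) (deriv (deriv u) s) s := (hdu' s).hasDerivAt
    have := h1.mul h2
    exact this.congr_deriv (by ring)
  have hganti : AntitoneOn (fun s => Real.exp (c * s) * deriv u s) (Set.Icc σ τ) := by
    apply antitoneOn_of_deriv_nonpos (convex_Icc σ τ)
    · exact ((Real.continuous_exp.comp (continuous_const.mul continuous_id)).mul
        hu1.continuous).continuousOn
    · intro s hs
      exact (hgderiv s).differentiableAt.differentiableWithinAt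
    · intro s hs
      rw [interior_Icc] at hs
      have hsIcc : s ∈ Set.Icc σ τ := Set.Ioo_subset_Icc_self hs
      rw [(hgderiv s).deriv]
      have hode' := hode s hsIcc
      have hnn := hsign s hsIcc (u s) (hunn s hsIcc)
      nlinarith [Real.exp_pos (c * s)]
  have hexpM : (0:ℝ) < Real.exp (|c| * (τ - σ)) := Real.exp_pos _
  have hUt : 0 ≤ u t := hunn t htIcc
  have hdivnn : 0 ≤ u t / ε := div_nonneg hUt hε.le
  have hexpb : ∀ x ∈ Set.Icc σ τ, Real.exp (c * (x - t)) ≤ Real.exp (|c| * (τ - σ)) := by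
    intro x hx
    apply Real.exp_le_exp.2
    have h1 : c * (x - t) ≤ |c * (x - t)| := le_abs_self _
    have h2 : |c * (x - t)| = |c| * |x - t| := abs_mul _ _
    have h3 : |x - t| ≤ τ - σ := by
      rw [abs_le]
      obtain ⟨hx1, hx2⟩ := hx
      obtain ⟨ht1', ht2'⟩ := htIcc
      constructor <;> linarith
    nlinarith [abs_nonneg c, abs_nonneg (x - t)]
  -- Upper bound
  have hupper : deriv u t ≤ u t / ε * Real.exp (|c| * (τ - σ)) := by
    have hab : t - ε < t := by linarith
    obtain ⟨ξ, hξ, hξd⟩ := exists_hasDerivAt_eq_slope u (deriv u) hab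
      hdu.continuous.continuousOn (fun x _ => (hdu x).hasDerivAt)
    obtain ⟨hξ1, hξ2⟩ := hξ
    have hξIcc : ξ ∈ Set.Icc σ τ := ⟨by linarith, by linarith⟩
    have haIcc : t - ε ∈ Set.Icc σ τ := ⟨by linarith, by linarith⟩
    have hslope : deriv u ξ = (u t - u (t - ε)) / ε := by
      rw [hξd]; congr 1; ring
    have hξle : deriv u ξ ≤ u t / ε := by
      rw [hslope]
      have := hunn (t - ε) haIcc
      gcongr
      linarith
    have hg1 : Real.exp (c * t) * deriv u t ≤ Real.exp (c * ξ) * deriv u ξ :=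
      hganti hξIcc htIcc hξ2.le
    have hkey : deriv u t ≤ Real.exp (c * (ξ - t)) * deriv u ξ := by
      have hpos : (0:ℝ) ≤ Real.exp (-(c * t)) := (Real.exp_pos _).le
      have h2 := mul_le_mul_of_nonneg_left hg1 hpos
      calc deriv u t = Real.exp (-(c * t)) * (Real.exp (c * t) * deriv u t) := by
            rw [← mul_assoc, ← Real.exp_add]; simp
        _ ≤ Real.exp (-(c * t)) * (Real.exp (c * ξ) * deriv u ξ) := h2
        _ = Real.exp (c * (ξ - t)) * deriv u ξ := by
            rw [← mul_assoc, ← Real.exp_add]; ring_nf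
    have hEb := hexpb ξ hξIcc
    have hEpos : (0:ℝ) < Real.exp (c * (ξ - t)) := Real.exp_pos _
    rcases le_or_gt 0 (deriv u ξ) with hc | hc
    · nlinarith
    · nlinarith
  -- Lower bound
  have hlower : -(u t / ε * Real.exp (|c| * (τ - σ))) ≤ deriv u t := by
    have hab : t < t + ε := by linarith
    obtain ⟨ξ, hξ, hξd⟩ := exists_hasDerivAt_eq_slope u (deriv u) hab
      hdu.continuous.continuousOn (fun x _ => (hdu x).hasDerivAt)
    obtain ⟨hξ1, hξ2⟩ := hξ
    have hξIcc : ξ ∈ Set.Icc σ τ := ⟨by linarith, by linarith⟩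
    have hbIcc : t + ε ∈ Set.Icc σ τ := ⟨by linarith, by linarith⟩
    have hslope : deriv u ξ = (u (t + ε) - u t) / ε := by
      rw [hξd]; congr 1; ring
    have hξge : -(u t / ε) ≤ deriv u ξ := by
      rw [hslope]
      have hub := hunn (t + ε) hbIcc
      rw [neg_le, ← neg_div]
      gcongr
      linarith
    have hg1 : Real.exp (c * ξ) * deriv u ξ ≤ Real.exp (c * t) * deriv u t :=
      hganti htIcc hξIcc hξ1.le
    have hkey : Real.exp (c * (ξ - t)) * deriv u ξ ≤ deriv u t := by
      have hpos : (0:ℝ) ≤ Real.exp (-(c * t)) := (Real.exp_pos _).le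
      have h2 := mul_le_mul_of_nonneg_left hg1 hpos
      calc Real.exp (c * (ξ - t)) * deriv u ξ
          = Real.exp (-(c * t)) * (Real.exp (c * ξ) * deriv u ξ) := by
            rw [← mul_assoc, ← Real.exp_add]; ring_nf
        _ ≤ Real.exp (-(c * t)) * (Real.exp (c * t) * deriv u t) := h2
        _ = deriv u t := by rw [← mul_assoc, ← Real.exp_add]; simp
    have hEb := hexpb ξ hξIcc
    have hEpos : (0:ℝ) < Real.exp (c * (ξ - t)) := Real.exp_pos _
    rcases le_or_gt (deriv u ξ) 0 with hc | hc
    · nlinarith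
    · nlinarith
  rw [abs_le]
  exact ⟨hlower, hupper⟩
end

section
/- Let u be a nonnegative C^2 T-periodic solution of u'' + c u' + λ a(t) g(u) + α = 0 with max over I = [σ,τ] of u equal to ρ, where a ≥ 0 on I. Set σ₀ = σ+ε, τ₀ = τ-ε with σ₀ < τ₀. Then min over [σ₀,τ₀] of u is at least δρ, where δ = ε/(ε + e^{2|c|T} T). -/
open Real Set

lemma key_ge (f : ℝ → ℝ) (hf : Differentiable ℝ f) (a b k : ℝ) (hab : a ≤ b)
    (h : ∀ s ∈ Set.Icc a b, k ≤ deriv f s) : k * (b - a) ≤ f b - f a := by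
  have hmono : MonotoneOn (fun s => f s - k * s) (Set.Icc a b) := by
    apply monotoneOn_of_deriv_nonneg (convex_Icc a b)
    · exact (hf.continuous.sub (continuous_const.mul continuous_id)).continuousOn
    · exact (hf.sub ((differentiable_id.const_mul k))).differentiableOn
    · intro x hx
      rw [interior_Icc] at hx
      have hx' : HasDerivAt (fun s => f s - k * s) (deriv f x - k) x := by
        exact ((hf x).hasDerivAt.sub ((hasDerivAt_id x).const_mul k)).congr_deriv (by ring)
      rw [hx'.deriv]
      have := h x ⟨hx.1.le, hx.2.le⟩
      linarith
  have := hmono ⟨le_refl a, hab⟩ ⟨hab, le_refl b⟩ hab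
  simp only at this
  linarith

lemma key_le (f : ℝ → ℝ) (hf : Differentiable ℝ f) (a b k : ℝ) (hab : a ≤ b)
    (h : ∀ s ∈ Set.Icc a b, deriv f s ≤ k) : f b - f a ≤ k * (b - a) := by
  have hneg : ∀ s ∈ Set.Icc a b, -k ≤ deriv (fun x => -f x) s := by
    intro s hs
    rw [deriv.fun_neg]
    have := h s hs
    linarith
  have := key_ge (fun x => -f x) hf.neg a b (-k) hab hneg
  linarith

theorem stmt4 (T c lam α ε σ τ ρ : ℝ) (hT : 0 < T) (hlam : 0 < lam) (hα : 0 ≤ α)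
    (hε : 0 < ε) (hσ : 0 ≤ σ) (hτ : τ ≤ T) (hord : σ + ε < τ - ε) (hρ : 0 < ρ)
    (a : ℝ → ℝ) (ha : Continuous a) (haP : Function.Periodic a T)
    (hapos : ∀ t ∈ Set.Icc σ τ, 0 ≤ a t)
    (g : ℝ → ℝ) (hg : Continuous g) (hgnn : ∀ s, 0 ≤ s → 0 ≤ g s)
    (u : ℝ → ℝ) (hu : ContDiff ℝ 2 u) (huP : Function.Periodic u T) (hunn : ∀ t, 0 ≤ u t)
    (hode : ∀ t, deriv (deriv u) t + c * deriv u t + lam * a t * g (u t) + α = 0)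
    (hmaxle : ∀ t ∈ Set.Icc σ τ, u t ≤ ρ) (hmaxeq : ∃ t₀ ∈ Set.Icc σ τ, u t₀ = ρ) :
    ∀ t ∈ Set.Icc (σ + ε) (τ - ε),
      ε / (ε + Real.exp (2 * |c| * T) * T) * ρ ≤ u t := by
  intro t ht
  obtain ⟨t₀, ht₀, hu₀⟩ := hmaxeq
  -- regularity
  have hd1 : Differentiable ℝ u := hu.differentiable (by norm_num)
  have hcd1 : ContDiff ℝ 1 (deriv u) := by
    have h2 : ContDiff ℝ (1 + 1) u := by
      convert hu using 2
      norm_num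
    exact (contDiff_succ_iff_deriv.mp h2).2.2
  have hd2 : Differentiable ℝ (deriv u) := (contDiff_one_iff_deriv.mp hcd1).1
  set E := Real.exp (|c| * T) with hE
  have hEpos : 0 < E := Real.exp_pos _
  have hE1 : 1 ≤ E := Real.one_le_exp (by positivity)
  -- v = exp(ct) u' is antitone on [σ,τ]
  have hvderiv : ∀ s, HasDerivAt (fun x => Real.exp (c * x) * deriv u x)
      (Real.exp (c * s) * (deriv (deriv u) s + c * deriv u s)) s := by
    intro s
    have h1 : HasDerivAt (fun x => Real.exp (c * x)) (Real.exp (c * s) * c) s := by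
      have := ((hasDerivAt_id s).const_mul c).exp
      simpa using this
    have h2 : HasDerivAt (deriv u) (deriv (deriv u) s) s := (hd2 s).hasDerivAt
    have := h1.mul h2
    exact this.congr_deriv (by ring)
  have hanti : AntitoneOn (fun x => Real.exp (c * x) * deriv u x) (Set.Icc σ τ) := by
    apply antitoneOn_of_deriv_nonpos (convex_Icc σ τ)
    · exact ((Real.continuous_exp.comp (continuous_const.mul continuous_id)).mul
        hcd1.continuous).continuousOn
    · intro x _
      exact (hvderiv x).differentiableAt.differentiableWithinAt
    · intro x hx
      rw [interior_Icc] at hx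
      rw [(hvderiv x).deriv]
      have h0 : deriv (deriv u) x + c * deriv u x = -(lam * a x * g (u x) + α) := by
        have := hode x; linarith
      rw [h0]
      have hax := hapos x ⟨hx.1.le, hx.2.le⟩
      have hgx := hgnn (u x) (hunn x)
      have he : 0 < Real.exp (c * x) := Real.exp_pos _
      have hnn : 0 ≤ lam * a x * g (u x) + α := by positivity
      nlinarith
  have htI : t ∈ Set.Icc σ τ := ⟨by linarith [ht.1], by linarith [ht.2]⟩
  -- exponential bounds
  have habs : ∀ x ∈ Set.Icc σ τ, ∀ y ∈ Set.Icc σ τ, |c * (x - y)| ≤ |c| * T := by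
    intro x hx y hy
    rw [abs_mul]
    have h1 : |x - y| ≤ T := by
      rw [abs_sub_le_iff]
      constructor <;> [linarith [hx.2, hy.1]; linarith [hy.2, hx.1]]
    exact mul_le_mul_of_nonneg_left h1 (abs_nonneg c)
  have hexp_ub : ∀ x ∈ Set.Icc σ τ, ∀ y ∈ Set.Icc σ τ, Real.exp (c * (x - y)) ≤ E := by
    intro x hx y hy
    exact Real.exp_le_exp.mpr ((le_abs_self _).trans (habs x hx y hy))
  have hexp_lb : ∀ x ∈ Set.Icc σ τ, ∀ y ∈ Set.Icc σ τ,
      Real.exp (-(|c| * T)) ≤ Real.exp (c * (x - y)) := by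
    intro x hx y hy
    exact Real.exp_le_exp.mpr (by linarith [neg_abs_le (c * (x - y)), habs x hx y hy])
  -- derivative comparison
  have hcomp : ∀ s ∈ Set.Icc σ τ, ∀ t' ∈ Set.Icc σ τ, s ≤ t' →
      Real.exp (c * (t' - s)) * deriv u t' ≤ deriv u s := by
    intro s hs t' ht' hst
    have h := hanti hs ht' hst
    simp only at h
    have hp : (0:ℝ) ≤ Real.exp (-(c * s)) := (Real.exp_pos _).le
    have h2 := mul_le_mul_of_nonneg_left h hp
    calc Real.exp (c * (t' - s)) * deriv u t'
        = Real.exp (-(c * s)) * (Real.exp (c * t') * deriv u t') := by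
          rw [← mul_assoc, ← Real.exp_add]; ring_nf
      _ ≤ Real.exp (-(c * s)) * (Real.exp (c * s) * deriv u s) := h2
      _ = deriv u s := by rw [← mul_assoc, ← Real.exp_add]; simp
  have hcomp2 : ∀ s ∈ Set.Icc σ τ, ∀ t' ∈ Set.Icc σ τ, s ≤ t' →
      deriv u t' ≤ Real.exp (c * (s - t')) * deriv u s := by
    intro s hs t' ht' hst
    have h := hanti hs ht' hst
    simp only at h
    have hp : (0:ℝ) ≤ Real.exp (-(c * t')) := (Real.exp_pos _).le
    have h2 := mul_le_mul_of_nonneg_left h hp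
    calc deriv u t'
        = Real.exp (-(c * t')) * (Real.exp (c * t') * deriv u t') := by
          rw [← mul_assoc, ← Real.exp_add]; simp
      _ ≤ Real.exp (-(c * t')) * (Real.exp (c * s) * deriv u s) := h2
      _ = Real.exp (c * (s - t')) * deriv u s := by
          rw [← mul_assoc, ← Real.exp_add]; ring_nf
  -- reduce goal
  have hEE : Real.exp (2 * |c| * T) = E * E := by
    rw [hE, ← Real.exp_add]; ring_nf
  rw [hEE]
  have hden : 0 < ε + E * E * T := by positivity
  rw [div_mul_eq_mul_div, div_le_iff₀ hden]
  -- main inequality: ε * ρ ≤ u t * (ε + E*E*T)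
  have hut : 0 ≤ u t := hunn t
  rcases le_or_gt 0 (deriv u t) with hpos | hneg
  · rcases le_or_gt t₀ t with hle | hlt
    · -- u nondecreasing on [t₀, t]
      have : ρ ≤ u t := by
        have h := key_ge u hd1 t₀ t 0 hle ?_
        · linarith [h, hu₀ ▸ h]
        · intro s hs
          have hsI : s ∈ Set.Icc σ τ := ⟨le_trans ht₀.1 hs.1, le_trans hs.2 htI.2⟩
          have := hcomp s hsI t htI hs.2
          nlinarith [Real.exp_pos (c * (t - s))]
      nlinarith [mul_le_mul_of_nonneg_left this hε.le,
        mul_nonneg hut (mul_nonneg (mul_nonneg hEpos.le hEpos.le) hT.le)]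
    · -- gradient estimate at t using [t-ε, t]
      have htm : t - ε ∈ Set.Icc σ τ := ⟨by linarith [ht.1], by linarith [htI.2, hε]⟩
      have ha1 : Real.exp (-(|c| * T)) * deriv u t * ε ≤ u t := by
        have h := key_ge u hd1 (t - ε) t (Real.exp (-(|c| * T)) * deriv u t)
          (by linarith) ?_
        · have := hunn (t - ε)
          linarith
        · intro s hs
          have hsI : s ∈ Set.Icc σ τ := ⟨le_trans htm.1 hs.1, le_trans hs.2 htI.2⟩
          have h1 := hcomp s hsI t htI hs.2
          have h2 := hexp_lb t htI s hsI
          linarith [mul_le_mul_of_nonneg_right h2 hpos]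
      -- growth estimate on [t, t₀]
      have hb1 : ρ - u t ≤ E * deriv u t * T := by
        have h := key_le u hd1 t t₀ (E * deriv u t) hlt.le ?_
        · have ht₀t : t₀ - t ≤ T := by
            have := ht₀.2; have := htI.1; linarith
          have hq := mul_le_mul_of_nonneg_left ht₀t (mul_nonneg hEpos.le hpos)
          have : E * deriv u t * (t₀ - t) ≤ E * deriv u t * T := by
            calc E * deriv u t * (t₀ - t) = E * deriv u t * (t₀ - t) := rfl
              _ ≤ E * deriv u t * T := by nlinarith [hq]
          linarith [hu₀ ▸ h]
        · intro s hs
          have hsI : s ∈ Set.Icc σ τ := ⟨le_trans htI.1 hs.1, le_trans hs.2 ht₀.2⟩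
          have h1 := hcomp2 t htI s hsI hs.1
          have h2 := hexp_ub t htI s hsI
          linarith [mul_le_mul_of_nonneg_right h2 hpos]
      have hinv : Real.exp (-(|c| * T)) * E = 1 := by
        rw [← Real.exp_add]; simp
      have hgrad : deriv u t * ε ≤ E * u t := by
        have h3 := mul_le_mul_of_nonneg_left ha1 hEpos.le
        have h4 : E * (Real.exp (-(|c| * T)) * deriv u t * ε) = deriv u t * ε := by
          rw [show E * (Real.exp (-(|c| * T)) * deriv u t * ε)
              = Real.exp (-(|c| * T)) * E * (deriv u t * ε) from by ring, hinv, one_mul]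
        linarith [h4 ▸ h3]
      linarith [mul_le_mul_of_nonneg_left hb1 hε.le,
        mul_le_mul_of_nonneg_left hgrad (mul_nonneg hEpos.le hT.le)]
  · rcases le_or_gt t t₀ with hle | hlt
    · -- u nonincreasing on [t, t₀]
      have : ρ ≤ u t := by
        have h := key_le u hd1 t t₀ 0 hle ?_
        · rw [hu₀] at h; linarith
        · intro s hs
          have hsI : s ∈ Set.Icc σ τ := ⟨le_trans htI.1 hs.1, le_trans hs.2 ht₀.2⟩
          have := hcomp2 t htI s hsI hs.1
          nlinarith [Real.exp_pos (c * (t - s))]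
      nlinarith [mul_le_mul_of_nonneg_left this hε.le,
        mul_nonneg hut (mul_nonneg (mul_nonneg hEpos.le hEpos.le) hT.le)]
    · -- gradient estimate at t using [t, t+ε]
      have htp : t + ε ∈ Set.Icc σ τ := ⟨by linarith [htI.1, hε], by linarith [ht.2]⟩
      have ha1 : Real.exp (-(|c| * T)) * (-(deriv u t)) * ε ≤ u t := by
        have h := key_le u hd1 t (t + ε) (Real.exp (-(|c| * T)) * deriv u t)
          (by linarith) ?_
        · have := hunn (t + ε)
          nlinarith
        · intro s hs
          have hsI : s ∈ Set.Icc σ τ := ⟨le_trans htI.1 hs.1, le_trans hs.2 htp.2⟩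
          have h1 := hcomp2 t htI s hsI hs.1
          have h2 := hexp_lb t htI s hsI
          linarith [mul_le_mul_of_nonpos_right h2 hneg.le]
      -- decay estimate on [t₀, t]
      have hb1 : ρ - u t ≤ E * (-(deriv u t)) * T := by
        have h := key_ge u hd1 t₀ t (E * deriv u t) hlt.le ?_
        · have ht₀t : t - t₀ ≤ T := by
            have := ht₀.1; have := htI.2; linarith
          have hq := mul_le_mul_of_nonpos_left ht₀t
            (mul_nonpos_of_nonneg_of_nonpos hEpos.le hneg.le)
          linarith [hu₀ ▸ h]
        · intro s hs
          have hsI : s ∈ Set.Icc σ τ := ⟨le_trans ht₀.1 hs.1, le_trans hs.2 htI.2⟩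
          have h1 := hcomp s hsI t htI hs.2
          have h2 := hexp_ub t htI s hsI
          linarith [mul_le_mul_of_nonpos_right h2 hneg.le]
      have hinv : Real.exp (-(|c| * T)) * E = 1 := by
        rw [← Real.exp_add]; simp
      have hgrad : -(deriv u t) * ε ≤ E * u t := by
        have h3 := mul_le_mul_of_nonneg_left ha1 hEpos.le
        have h4 : E * (Real.exp (-(|c| * T)) * (-(deriv u t)) * ε) = -(deriv u t) * ε := by
          rw [show E * (Real.exp (-(|c| * T)) * (-(deriv u t)) * ε)
              = Real.exp (-(|c| * T)) * E * (-(deriv u t) * ε) from by ring, hinv, one_mul]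
        linarith [h4 ▸ h3]
      linarith [mul_le_mul_of_nonneg_left hb1 hε.le,
        mul_le_mul_of_nonneg_left hgrad (mul_nonneg hEpos.le hT.le)]
end

section
/- Let u be a nonnegative C^2 T-periodic solution of u'' + c u' + λ a(t) g(u) + α = 0, with a ≥ 0 on I = [σ,τ] ⊆ [0,T] and ∫_{σ₀}^{τ₀} a > 0 (σ₀ = σ+ε < τ-ε = τ₀), such that maxₜ∈I u(t) = ρ. Let η = min{g(s) : δρ ≤ s ≤ ρ} with δ = ε/(ε + e^{2|c|T}T). Then λ η ∫_{σ₀}^{τ₀} a(t) dt ≤ 2ρ e^{|c|T}/ε + 2|c|ρ. In particular, if λ > λ* := 2ρ(ε|c| + e^{|c|T})/(ε η ∫_{σ₀}^{τ₀} a), no such solution exists. -/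
private lemma auxE {p q x y E : ℝ} (h : Real.exp p * x ≤ Real.exp q * y) (hpq : |p - q| ≤ E) :
    (0 ≤ x → Real.exp (-E) * x ≤ y) ∧ (x ≤ 0 → Real.exp E * x ≤ y) ∧
    (0 ≤ y → x ≤ Real.exp E * y) ∧ (y ≤ 0 → x ≤ Real.exp (-E) * y) := by
  obtain ⟨h1, h2⟩ := abs_le.mp hpq
  have e1 : Real.exp (-E) ≤ Real.exp (p - q) := Real.exp_le_exp.mpr (by linarith)
  have e2 : Real.exp (p - q) ≤ Real.exp E := Real.exp_le_exp.mpr (by linarith)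
  have e3 : Real.exp (-E) ≤ Real.exp (q - p) := Real.exp_le_exp.mpr (by linarith)
  have e4 : Real.exp (q - p) ≤ Real.exp E := Real.exp_le_exp.mpr (by linarith)
  have hy : Real.exp (p - q) * x ≤ y := by
    have h5 := mul_le_mul_of_nonneg_left h (Real.exp_nonneg (-q))
    rw [← mul_assoc, ← mul_assoc, ← Real.exp_add, ← Real.exp_add,
      show -q + p = p - q by ring] at h5
    simpa using h5
  have hx : x ≤ Real.exp (q - p) * y := by
    have h5 := mul_le_mul_of_nonneg_left h (Real.exp_nonneg (-p))
    rw [← mul_assoc, ← mul_assoc, ← Real.exp_add, ← Real.exp_add,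
      show -p + q = q - p by ring] at h5
    simpa using h5
  have p1 := Real.exp_pos (p - q)
  have p2 := Real.exp_pos (q - p)
  refine ⟨fun h0 => ?_, fun h0 => ?_, fun h0 => ?_, fun h0 => ?_⟩ <;> nlinarith

set_option maxHeartbeats 1600000 in
theorem stmt5 (T c lam α ε σ τ ρ η : ℝ) (hT : 0 < T) (hlam : 0 < lam) (hα : 0 ≤ α)
    (hε : 0 < ε) (hσ : 0 ≤ σ) (hτ : τ ≤ T) (hord : σ + ε < τ - ε) (hρ : 0 < ρ)
    (a : ℝ → ℝ) (ha : Continuous a) (haP : Function.Periodic a T)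
    (hapos : ∀ t ∈ Set.Icc σ τ, 0 ≤ a t)
    (haI : 0 < ∫ t in (σ + ε)..(τ - ε), a t)
    (g : ℝ → ℝ) (hg : Continuous g) (hg0 : g 0 = 0) (hgpos : ∀ s > (0:ℝ), 0 < g s)
    (hη : IsLeast (g '' Set.Icc (ε / (ε + Real.exp (2 * |c| * T) * T) * ρ) ρ) η)
    (u : ℝ → ℝ) (hu : ContDiff ℝ 2 u) (huP : Function.Periodic u T) (hunn : ∀ t, 0 ≤ u t)
    (hode : ∀ t, deriv (deriv u) t + c * deriv u t + lam * a t * g (u t) + α = 0)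
    (hmaxle : ∀ t ∈ Set.Icc σ τ, u t ≤ ρ) (hmaxeq : ∃ t₀ ∈ Set.Icc σ τ, u t₀ = ρ) :
    lam * η * (∫ t in (σ + ε)..(τ - ε), a t)
      ≤ 2 * ρ * Real.exp (|c| * T) / ε + 2 * |c| * ρ := by
  obtain ⟨t₀, ht₀I, ht₀⟩ := hmaxeq
  obtain ⟨ht₀1, ht₀2⟩ := ht₀I
  set E := |c| * T with hE
  set σ₀ := σ + ε with hσ₀def
  set τ₀ := τ - ε with hτ₀def
  clear_value E σ₀ τ₀
  have hEnn : 0 ≤ E := hE ▸ mul_nonneg (abs_nonneg c) hT.le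
  have hστ : σ < τ := by linarith
  have h01 : σ₀ < τ₀ := hord
  have hu1 : Differentiable ℝ u := hu.differentiable (by norm_num)
  have hu2 : ContDiff ℝ 1 (deriv u) :=
    (contDiff_succ_iff_deriv.mp (show ContDiff ℝ (1+1) u by exact_mod_cast hu)).2.2
  have hu'd : Differentiable ℝ (deriv u) := hu2.differentiable one_ne_zero
  have hu''c : Continuous (deriv (deriv u)) :=
    ((contDiff_succ_iff_deriv.mp (show ContDiff ℝ (0+1) (deriv u) by exact_mod_cast hu2)).2.2).continuous
  have hu'c : Continuous (deriv u) := hu'd.continuous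
  have huc : Continuous u := hu1.continuous
  have hgu : ∀ t, 0 ≤ g (u t) := by
    intro t
    rcases eq_or_lt_of_le (hunn t) with h | h
    · rw [← h, hg0]
    · exact (hgpos _ h).le
  -- derivative of v t = exp(c t) * u'(t)
  have hvd : ∀ t, HasDerivAt (fun s => Real.exp (c*s) * deriv u s)
      (Real.exp (c*t) * c * deriv u t + Real.exp (c*t) * deriv (deriv u) t) t := by
    intro t
    have h1 : HasDerivAt (fun s : ℝ => Real.exp (c*s)) (Real.exp (c*t) * c) t := by
      have := ((hasDerivAt_id t).const_mul c).exp
      simpa using this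
    exact h1.mul (hu'd t).hasDerivAt
  have hvmono : AntitoneOn (fun s => Real.exp (c*s) * deriv u s) (Set.Icc σ τ) := by
    apply antitoneOn_of_deriv_nonpos (convex_Icc σ τ)
    · exact ((Real.continuous_exp.comp (continuous_const.mul continuous_id)).mul hu'c).continuousOn
    · exact fun t _ => (hvd t).differentiableAt.differentiableWithinAt
    · intro t ht
      rw [interior_Icc] at ht
      rw [(hvd t).deriv]
      have hga : 0 ≤ lam * a t * g (u t) :=
        mul_nonneg (mul_nonneg hlam.le (hapos t ⟨ht.1.le, ht.2.le⟩)) (hgu t)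
      have h10 : 0 ≤ Real.exp (c*t) * (lam * a t * g (u t) + α) :=
        mul_nonneg (Real.exp_pos _).le (by linarith)
      have h11 : Real.exp (c*t) * (deriv (deriv u) t + c * deriv u t + lam * a t * g (u t) + α)
          = 0 := by rw [hode t]; ring
      nlinarith [h10, h11]
  have habs : ∀ x y, σ ≤ x → x ≤ y → y ≤ τ → |c*y - c*x| ≤ E := by
    intro x y hx hxy hy
    rw [show c*y - c*x = c*(y-x) by ring, abs_mul, hE]
    apply mul_le_mul_of_nonneg_left _ (abs_nonneg c)
    rw [abs_of_nonneg (by linarith)]; linarith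
  -- MVT combined with monotonicity of v
  have hMVT : ∀ s₁ s₂, σ ≤ s₁ → s₁ < s₂ → s₂ ≤ τ → ∃ ξ, s₁ < ξ ∧ ξ < s₂ ∧
      u s₂ - u s₁ = deriv u ξ * (s₂ - s₁) ∧
      Real.exp (c*ξ) * deriv u ξ ≤ Real.exp (c*s₁) * deriv u s₁ ∧
      Real.exp (c*s₂) * deriv u s₂ ≤ Real.exp (c*ξ) * deriv u ξ := by
    intro s₁ s₂ h1 h2 h3
    obtain ⟨ξ, ⟨hξa, hξb⟩, hslope⟩ := exists_hasDerivAt_eq_slope u (deriv u) h2 huc.continuousOn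
      (fun x _ => (hu1 x).hasDerivAt)
    refine ⟨ξ, hξa, hξb, ?_, ?_, ?_⟩
    · rw [hslope, div_mul_cancel₀ _ (sub_ne_zero.mpr h2.ne')]
    · exact hvmono ⟨h1, by linarith⟩ ⟨by linarith, by linarith⟩ hξa.le
    · exact hvmono ⟨by linarith, by linarith⟩ ⟨by linarith, h3⟩ hξb.le
  -- gradient bound : ε |u'(t)| ≤ e^E u(t) on [σ₀, τ₀]
  have hB : ∀ t, σ₀ ≤ t → t ≤ τ₀ → ε * |deriv u t| ≤ Real.exp E * u t := by
    intro t h1 h2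
    rcases le_or_gt (deriv u t) 0 with hd | hd
    · obtain ⟨ξ, hξ1, hξ2, heq, hv1, hv2⟩ := hMVT t τ (by linarith) (by linarith) le_rfl
      have hpq : |c*t - c*ξ| ≤ E := by
        rw [abs_sub_comm]; exact habs t ξ (by linarith) hξ1.le (by linarith)
      have h' : Real.exp (c*t) * (-deriv u t) ≤ Real.exp (c*ξ) * (-deriv u ξ) := by
        nlinarith [hv1]
      obtain ⟨a1, a2, a3, a4⟩ := auxE h' hpq
      have hy0 : 0 ≤ -deriv u ξ :=
        le_trans (mul_nonneg (Real.exp_pos (-E)).le (by linarith)) (a1 (by linarith))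
      have h6 : -deriv u t ≤ Real.exp E * (-deriv u ξ) := a3 hy0
      have h7 : ε * (-deriv u ξ) ≤ u t := by
        have h8 := mul_le_mul_of_nonneg_left (show ε ≤ τ - t by linarith) hy0
        linarith [hunn τ, heq, h8]
      rw [abs_of_nonpos hd]
      calc ε * (-deriv u t) ≤ ε * (Real.exp E * (-deriv u ξ)) :=
            mul_le_mul_of_nonneg_left h6 hε.le
        _ = Real.exp E * (ε * (-deriv u ξ)) := by ring
        _ ≤ Real.exp E * u t := mul_le_mul_of_nonneg_left h7 (Real.exp_pos E).le
    · obtain ⟨ξ, hξ1, hξ2, heq, hv1, hv2⟩ := hMVT σ t le_rfl (by linarith) (by linarith)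
      have hpq : |c*t - c*ξ| ≤ E := habs ξ t (by linarith) hξ2.le (by linarith)
      obtain ⟨a1, a2, a3, a4⟩ := auxE hv2 hpq
      have hy0 : 0 ≤ deriv u ξ :=
        le_trans (mul_nonneg (Real.exp_pos (-E)).le hd.le) (a1 hd.le)
      have h6 : deriv u t ≤ Real.exp E * deriv u ξ := a3 hy0
      have h7 : ε * deriv u ξ ≤ u t := by
        have h8 := mul_le_mul_of_nonneg_left (show ε ≤ t - σ by linarith) hy0
        linarith [hunn σ, heq, h8]
      rw [abs_of_pos hd]
      calc ε * deriv u t ≤ ε * (Real.exp E * deriv u ξ) := mul_le_mul_of_nonneg_left h6 hε.le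
        _ = Real.exp E * (ε * deriv u ξ) := by ring
        _ ≤ Real.exp E * u t := mul_le_mul_of_nonneg_left h7 (Real.exp_pos E).le
  have hEE : Real.exp E * Real.exp E = Real.exp (2 * |c| * T) := by
    rw [← Real.exp_add, hE]; ring_nf
  have hden : 0 < ε + Real.exp (2 * |c| * T) * T := by positivity
  -- lower bound : δ ρ ≤ u t on [σ₀, τ₀]
  have hC : ∀ t, σ₀ ≤ t → t ≤ τ₀ → ε / (ε + Real.exp (2 * |c| * T) * T) * ρ ≤ u t := by
    intro t h1 h2
    have hE2pos := Real.exp_pos (2 * |c| * T)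
    suffices hs : ε * ρ ≤ (ε + Real.exp (2 * |c| * T) * T) * u t by
      rw [div_mul_eq_mul_div, div_le_iff₀ hden]
      nlinarith [hs]
    rcases lt_trichotomy t t₀ with hlt | heqt | hgt
    · rcases le_or_gt (deriv u t) 0 with hd | hd
      · -- u'(t) ≤ 0 forces u(t) ≥ ρ
        obtain ⟨ξ, hξ1, hξ2, heq, hv1, hv2⟩ := hMVT t t₀ (by linarith) hlt ht₀2
        have hpq : |c*ξ - c*t| ≤ E := habs t ξ (by linarith) hξ1.le (by linarith)
        have a4 := (auxE hv1 hpq).2.2.2 hd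
        have hρle : ρ ≤ u t := by
          have h8 : deriv u ξ ≤ 0 :=
            le_trans a4 (by nlinarith [Real.exp_pos (-E)])
          nlinarith [heq, mul_nonpos_of_nonpos_of_nonneg h8 (show (0:ℝ) ≤ t₀ - t by linarith)]
        nlinarith [hunn t, mul_pos hE2pos hT]
      · obtain ⟨ξ, hξ1, hξ2, heq, hv1, hv2⟩ := hMVT t t₀ (by linarith) hlt ht₀2
        have hpq : |c*ξ - c*t| ≤ E := habs t ξ (by linarith) hξ1.le (by linarith)
        have a3 := (auxE hv1 hpq).2.2.1 hd.le
        have hBt := hB t h1 h2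
        rw [abs_of_pos hd] at hBt
        have k1 : ρ - u t ≤ Real.exp E * deriv u t * T := by
          have p1 := mul_le_mul_of_nonneg_right a3 (show (0:ℝ) ≤ t₀ - t by linarith)
          have p2 := mul_le_mul_of_nonneg_left (show t₀ - t ≤ T by linarith)
            (mul_nonneg (Real.exp_pos E).le hd.le)
          nlinarith [heq]
        have k2 := mul_le_mul_of_nonneg_left hBt (mul_nonneg (Real.exp_pos E).le hT.le)
        have k2' : Real.exp E * T * (ε * deriv u t) ≤ Real.exp (2 * |c| * T) * T * u t := by
          calc Real.exp E * T * (ε * deriv u t) ≤ Real.exp E * T * (Real.exp E * u t) := k2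
            _ = Real.exp E * Real.exp E * T * u t := by ring
            _ = Real.exp (2 * |c| * T) * T * u t := by rw [hEE]
        have k3 := mul_le_mul_of_nonneg_left k1 hε.le
        nlinarith [k2', k3]
    · subst heqt
      nlinarith [mul_pos (mul_pos hE2pos hT) hρ, ht₀]
    · rcases le_or_gt 0 (deriv u t) with hd | hd
      · obtain ⟨ξ, hξ1, hξ2, heq, hv1, hv2⟩ := hMVT t₀ t (by linarith) hgt (by linarith)
        have hpq : |c*t - c*ξ| ≤ E := habs ξ t (by linarith) hξ2.le (by linarith)
        have a1 := (auxE hv2 hpq).1 hd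
        have hρle : ρ ≤ u t := by
          have hy0 : 0 ≤ deriv u ξ :=
            le_trans (mul_nonneg (Real.exp_pos (-E)).le hd) a1
          nlinarith [heq, mul_nonneg hy0 (show (0:ℝ) ≤ t - t₀ by linarith)]
        nlinarith [hunn t, mul_pos hE2pos hT]
      · obtain ⟨ξ, hξ1, hξ2, heq, hv1, hv2⟩ := hMVT t₀ t (by linarith) hgt (by linarith)
        have hpq : |c*t - c*ξ| ≤ E := habs ξ t (by linarith) hξ2.le (by linarith)
        have a2 := (auxE hv2 hpq).2.1 hd.le
        have hBt := hB t h1 h2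
        rw [abs_of_neg hd] at hBt
        have k1 : ρ - u t ≤ Real.exp E * (-deriv u t) * T := by
          have p1 := mul_le_mul_of_nonneg_right a2 (show (0:ℝ) ≤ t - t₀ by linarith)
          have p2 := mul_le_mul_of_nonpos_left (show t - t₀ ≤ T by linarith)
            (mul_nonpos_of_nonneg_of_nonpos (Real.exp_pos E).le hd.le)
          nlinarith [heq]
        have k2 := mul_le_mul_of_nonneg_left hBt (mul_nonneg (Real.exp_pos E).le hT.le)
        have k2' : Real.exp E * T * (ε * (-deriv u t)) ≤ Real.exp (2 * |c| * T) * T * u t := by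
          calc Real.exp E * T * (ε * (-deriv u t)) ≤ Real.exp E * T * (Real.exp E * u t) := k2
            _ = Real.exp E * Real.exp E * T * u t := by ring
            _ = Real.exp (2 * |c| * T) * T * u t := by rw [hEE]
        have k3 := mul_le_mul_of_nonneg_left k1 hε.le
        nlinarith [k2', k3]
  -- integrate the ODE over [σ₀, τ₀]
  have hσ₀I : σ₀ ∈ Set.Icc σ τ := ⟨by linarith, by linarith⟩
  have hτ₀I : τ₀ ∈ Set.Icc σ τ := ⟨by linarith, by linarith⟩
  have hcgu : Continuous (fun t => a t * g (u t)) := ha.mul (hg.comp huc)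
  have hFTC1 : ∫ t in σ₀..τ₀, deriv (deriv u) t = deriv u τ₀ - deriv u σ₀ :=
    intervalIntegral.integral_deriv_eq_sub (fun t _ => hu'd t) (hu''c.intervalIntegrable _ _)
  have hFTC2 : ∫ t in σ₀..τ₀, deriv u t = u τ₀ - u σ₀ :=
    intervalIntegral.integral_deriv_eq_sub (fun t _ => hu1 t) (hu'c.intervalIntegrable _ _)
  have hzero : (∫ t in σ₀..τ₀,
      (deriv (deriv u) t + c * deriv u t + lam * (a t * g (u t)) + α)) = 0 := by
    have he : (fun t => deriv (deriv u) t + c * deriv u t + lam * (a t * g (u t)) + α)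
        = fun _ => (0:ℝ) := by
      funext t
      have := hode t
      linarith [this, mul_assoc lam (a t) (g (u t))]
    rw [he]
    simp
  have i1 : IntervalIntegrable (fun t => deriv (deriv u) t) MeasureTheory.volume σ₀ τ₀ :=
    hu''c.intervalIntegrable _ _
  have i2 : IntervalIntegrable (fun t => c * deriv u t) MeasureTheory.volume σ₀ τ₀ :=
    (continuous_const.mul hu'c).intervalIntegrable _ _
  have i3 : IntervalIntegrable (fun t => lam * (a t * g (u t))) MeasureTheory.volume σ₀ τ₀ :=
    (continuous_const.mul hcgu).intervalIntegrable _ _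
  have i4 : IntervalIntegrable (fun _ : ℝ => α) MeasureTheory.volume σ₀ τ₀ :=
    intervalIntegrable_const
  have hsplit : (deriv u τ₀ - deriv u σ₀) + c * (u τ₀ - u σ₀)
      + lam * (∫ t in σ₀..τ₀, a t * g (u t)) + α * (τ₀ - σ₀) = 0 := by
    have e : (∫ t in σ₀..τ₀,
        (deriv (deriv u) t + c * deriv u t + lam * (a t * g (u t)) + α))
        = (∫ t in σ₀..τ₀, deriv (deriv u) t) + (∫ t in σ₀..τ₀, c * deriv u t)
          + (∫ t in σ₀..τ₀, lam * (a t * g (u t))) + (∫ t in σ₀..τ₀, (α:ℝ)) := by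
      rw [intervalIntegral.integral_add ((i1.add i2).add i3) i4,
        intervalIntegral.integral_add (i1.add i2) i3,
        intervalIntegral.integral_add i1 i2]
    rw [hzero, hFTC1, intervalIntegral.integral_const_mul,
      intervalIntegral.integral_const_mul, hFTC2, intervalIntegral.integral_const,
      smul_eq_mul] at e
    linarith [e]
  -- pointwise comparison of integrands
  have hmono : η * (∫ t in σ₀..τ₀, a t) ≤ ∫ t in σ₀..τ₀, a t * g (u t) := by
    rw [← intervalIntegral.integral_const_mul]
    apply intervalIntegral.integral_mono_on h01.le ((continuous_const.mul ha).intervalIntegrable _ _)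
      (hcgu.intervalIntegrable _ _)
    intro t ht
    have htI : t ∈ Set.Icc σ τ := ⟨by linarith [ht.1], by linarith [ht.2]⟩
    have hg1 : η ≤ g (u t) := hη.2 ⟨u t, ⟨hC t ht.1 ht.2, hmaxle t htI⟩, rfl⟩
    have hg2 : 0 ≤ a t := hapos t htI
    calc η * a t = a t * η := mul_comm _ _
      _ ≤ a t * g (u t) := mul_le_mul_of_nonneg_left hg1 hg2
  -- bounds at the endpoints
  have hg1 : ε * |deriv u σ₀| ≤ Real.exp E * ρ :=
    le_trans (hB σ₀ le_rfl h01.le)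
      (mul_le_mul_of_nonneg_left (hmaxle σ₀ hσ₀I) (Real.exp_pos E).le)
  have hg2 : ε * |deriv u τ₀| ≤ Real.exp E * ρ :=
    le_trans (hB τ₀ h01.le le_rfl)
      (mul_le_mul_of_nonneg_left (hmaxle τ₀ hτ₀I) (Real.exp_pos E).le)
  have hd1 : deriv u σ₀ ≤ Real.exp E * ρ / ε := by
    rw [le_div_iff₀ hε]
    nlinarith [mul_le_mul_of_nonneg_right (le_abs_self (deriv u σ₀)) hε.le, hg1]
  have hd2 : -deriv u τ₀ ≤ Real.exp E * ρ / ε := by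
    rw [le_div_iff₀ hε]
    nlinarith [mul_le_mul_of_nonneg_right (neg_abs_le (deriv u τ₀)) hε.le, hg2]
  have hcb : c * (u σ₀ - u τ₀) ≤ |c| * ρ := by
    have m1 := hmaxle σ₀ hσ₀I
    have m2 := hmaxle τ₀ hτ₀I
    have m3 := hunn σ₀
    have m4 := hunn τ₀
    calc c * (u σ₀ - u τ₀) ≤ |c * (u σ₀ - u τ₀)| := le_abs_self _
      _ = |c| * |u σ₀ - u τ₀| := abs_mul _ _
      _ ≤ |c| * ρ := mul_le_mul_of_nonneg_left (abs_le.mpr ⟨by linarith, by linarith⟩)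
            (abs_nonneg c)
  have hαb : 0 ≤ α * (τ₀ - σ₀) := mul_nonneg hα (by linarith)
  have hfin : lam * (∫ t in σ₀..τ₀, a t * g (u t))
      ≤ 2 * ρ * Real.exp E / ε + |c| * ρ := by
    have heq2 : lam * (∫ t in σ₀..τ₀, a t * g (u t))
        = (deriv u σ₀ - deriv u τ₀) + c * (u σ₀ - u τ₀) - α * (τ₀ - σ₀) := by
      linarith [hsplit]
    rw [heq2]
    have : (2:ℝ) * ρ * Real.exp E / ε = Real.exp E * ρ / ε + Real.exp E * ρ / ε := by ring
    rw [this]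
    linarith only [hd1, hd2, hcb, hαb]
  have habsρ : 0 ≤ |c| * ρ := mul_nonneg (abs_nonneg c) hρ.le
  calc lam * η * (∫ t in σ₀..τ₀, a t) = lam * (η * ∫ t in σ₀..τ₀, a t) := by ring
    _ ≤ lam * ∫ t in σ₀..τ₀, a t * g (u t) := mul_le_mul_of_nonneg_left hmono hlam.le
    _ ≤ 2 * ρ * Real.exp E / ε + |c| * ρ := hfin
    _ ≤ 2 * ρ * Real.exp E / ε + 2 * |c| * ρ := by linarith
end

section
/- Let u be a nonnegative C^2 T-periodic solution of u'' + c u' + λ a(t) g(u) + α = 0 with α ≥ 0, a ≥ 0 on I = [σ,τ] and maxₜ∈I u ≤ ρ, where σ₀ = σ+ε < τ-ε = τ₀. Then α(τ₀ - σ₀) ≤ 2ρe^{|c|T}/ε + 2|c|ρ. In particular, for α > (2ρe^{|c|T}/ε + 2|c|ρ)/(τ₀-σ₀), no such solution exists. -/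
theorem stmt6 (T c lam α ε σ τ ρ : ℝ) (hT : 0 < T) (hlam : 0 < lam) (hα : 0 ≤ α)
    (hε : 0 < ε) (hσ : 0 ≤ σ) (hτ : τ ≤ T) (hord : σ + ε < τ - ε) (hρ : 0 ≤ ρ)
    (a : ℝ → ℝ) (ha : Continuous a) (haP : Function.Periodic a T)
    (hapos : ∀ t ∈ Set.Icc σ τ, 0 ≤ a t)
    (g : ℝ → ℝ) (hg : Continuous g) (hgnn : ∀ s, 0 ≤ s → 0 ≤ g s)
    (u : ℝ → ℝ) (hu : ContDiff ℝ 2 u) (huP : Function.Periodic u T) (hunn : ∀ t, 0 ≤ u t)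
    (hode : ∀ t, deriv (deriv u) t + c * deriv u t + lam * a t * g (u t) + α = 0)
    (hmaxle : ∀ t ∈ Set.Icc σ τ, u t ≤ ρ) :
    α * ((τ - ε) - (σ + ε)) ≤ 2 * ρ * Real.exp (|c| * T) / ε + 2 * |c| * ρ := by
  have hεT : ε ≤ T := by linarith
  have hd1 : Differentiable ℝ u := hu.differentiable (by norm_num)
  have h2 : ContDiff ℝ 1 (deriv u) :=
    (contDiff_succ_iff_deriv.mp (hu.of_le (by norm_num : ((1:WithTop ℕ∞) + 1) ≤ 2))).2.2
  have hd2 : Differentiable ℝ (deriv u) := h2.differentiable one_ne_zero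
  have hcont1 : Continuous (deriv u) := hd2.continuous
  have hcont2 : Continuous (deriv (deriv u)) := h2.continuous_deriv le_rfl
  set v : ℝ → ℝ := fun t => Real.exp (c * t) * deriv u t with hv_def
  have hv : ∀ t, HasDerivAt v
      (Real.exp (c * t) * (deriv (deriv u) t + c * deriv u t)) t := by
    intro t
    have h1 : HasDerivAt (fun s => Real.exp (c * s)) (Real.exp (c * t) * c) t := by
      simpa using ((hasDerivAt_id t).const_mul c).exp
    have h2' : HasDerivAt (deriv u) (deriv (deriv u) t) t := (hd2 t).hasDerivAt
    have : HasDerivAt v (Real.exp (c * t) * c * deriv u t + Real.exp (c * t) * deriv (deriv u) t) t :=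
      h1.mul h2'
    convert this using 1
    ring
  have hvanti : AntitoneOn v (Set.Icc σ τ) := by
    apply antitoneOn_of_deriv_nonpos (convex_Icc σ τ)
    · exact ((Real.continuous_exp.comp (continuous_const.mul continuous_id)).mul
        hcont1).continuousOn
    · exact fun t _ => (hv t).differentiableAt.differentiableWithinAt
    · intro t ht
      rw [interior_Icc] at ht
      rw [(hv t).deriv]
      have ha' : 0 ≤ a t := hapos t ⟨ht.1.le, ht.2.le⟩
      have hx : deriv (deriv u) t + c * deriv u t ≤ 0 := by
        have h0 := hode t
        have h1 : 0 ≤ lam * a t * g (u t) :=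
          mul_nonneg (mul_nonneg hlam.le ha') (hgnn _ (hunn t))
        linarith
      exact mul_nonpos_of_nonneg_of_nonpos (Real.exp_pos _).le hx
  -- the slope over any subinterval of length ε is bounded by ρ/ε in absolute value
  have slope_bd : ∀ s, σ ≤ s → s + ε ≤ τ →
      ∃ ξ ∈ Set.Ioo s (s + ε), |deriv u ξ| ≤ ρ / ε := by
    intro s hs1 hs2
    obtain ⟨ξ, hξ, hξeq⟩ := exists_deriv_eq_slope u (by linarith : s < s + ε)
      hd1.continuous.continuousOn (hd1.differentiableOn)
    refine ⟨ξ, hξ, ?_⟩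
    rw [hξeq]
    have h1 : u (s + ε) ≤ ρ := hmaxle _ ⟨by linarith, by linarith⟩
    have h2' : u s ≤ ρ := hmaxle _ ⟨hs1, by linarith⟩
    have habs : |u (s + ε) - u s| ≤ ρ := by
      rw [abs_le]
      constructor <;> nlinarith [hunn (s + ε), hunn s]
    have : s + ε - s = ε := by ring
    rw [this, abs_div, abs_of_pos hε]
    exact div_le_div_of_nonneg_right habs hε.le |>.trans_eq rfl
  -- exponential comparison
  have hexp_cmp : ∀ x y : ℝ, |x - y| ≤ ε →
      Real.exp (c * x) ≤ Real.exp (c * y) * Real.exp (|c| * T) := by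
    intro x y hxy
    rw [← Real.exp_add, Real.exp_le_exp]
    have h1 : c * x - c * y ≤ |c * (x - y)| := by
      calc c * x - c * y = c * (x - y) := by ring
        _ ≤ |c * (x - y)| := le_abs_self _
    have h2' : |c * (x - y)| = |c| * |x - y| := abs_mul _ _
    have h3 : |c| * |x - y| ≤ |c| * T :=
      mul_le_mul_of_nonneg_left (hxy.trans hεT) (abs_nonneg c)
    linarith
  -- pointwise derivative bound at points of [σ+ε, τ-ε]
  have key : ∀ t, σ + ε ≤ t → t ≤ τ - ε →
      |deriv u t| ≤ ρ * Real.exp (|c| * T) / ε := by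
    intro t ht1 ht2
    have htI : t ∈ Set.Icc σ τ := ⟨by linarith, by linarith⟩
    have hρε : (0:ℝ) ≤ ρ / ε := div_nonneg hρ hε.le
    rw [abs_le]
    constructor
    · -- lower bound, using ξ ∈ (t, t+ε)
      obtain ⟨ξ, hξmem, hξbd⟩ := slope_bd t (by linarith) (by linarith)
      have hmono := hvanti htI ⟨by linarith [hξmem.1], by linarith [hξmem.2]⟩ hξmem.1.le
      -- v ξ ≤ v t, i.e. exp(cξ) u'(ξ) ≤ exp(ct) u'(t)
      have h1 : -(ρ / ε) ≤ deriv u ξ := (abs_le.mp hξbd).1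
      have h2' : Real.exp (c * ξ) ≤ Real.exp (c * t) * Real.exp (|c| * T) := by
        apply hexp_cmp
        rw [abs_le]; constructor <;> [linarith [hξmem.1]; linarith [hξmem.2]]
      have h3 : -(Real.exp (c * t) * Real.exp (|c| * T) * (ρ / ε)) ≤
          Real.exp (c * ξ) * deriv u ξ := by
        rcases le_or_gt 0 (deriv u ξ) with h | h
        · nlinarith [Real.exp_pos (c * ξ), Real.exp_pos (c * t), Real.exp_pos (|c| * T)]
        · nlinarith [Real.exp_pos (c * ξ), Real.exp_pos (c * t), Real.exp_pos (|c| * T)]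
      have h4 : Real.exp (c * t) * (-(Real.exp (|c| * T) * (ρ / ε))) ≤
          Real.exp (c * t) * deriv u t := by
        refine le_trans ?_ (le_trans h3 hmono)
        apply le_of_eq; ring
      have h5 := Real.exp_pos (c * t)
      have h6 := (mul_le_mul_iff_of_pos_left h5).mp h4
      have heq : ρ * Real.exp (|c| * T) / ε = Real.exp (|c| * T) * (ρ / ε) := by ring
      linarith
    · -- upper bound, using ξ ∈ (t-ε, t)
      obtain ⟨ξ, hξmem, hξbd⟩ := slope_bd (t - ε) (by linarith) (by linarith)
      have hξmem' : ξ ∈ Set.Ioo (t - ε) t := by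
        have : t - ε + ε = t := by ring
        rwa [this] at hξmem
      have hmono := hvanti ⟨by linarith [hξmem'.1], by linarith [hξmem'.2]⟩ htI hξmem'.2.le
      have h1 : deriv u ξ ≤ ρ / ε := (abs_le.mp hξbd).2
      have h2' : Real.exp (c * ξ) ≤ Real.exp (c * t) * Real.exp (|c| * T) := by
        apply hexp_cmp
        rw [abs_le]; constructor <;> [linarith [hξmem'.1]; linarith [hξmem'.2]]
      have h3 : Real.exp (c * ξ) * deriv u ξ ≤
          Real.exp (c * t) * Real.exp (|c| * T) * (ρ / ε) := by
        rcases le_or_gt 0 (deriv u ξ) with h | h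
        · nlinarith [Real.exp_pos (c * ξ), Real.exp_pos (c * t), Real.exp_pos (|c| * T)]
        · nlinarith [Real.exp_pos (c * ξ), Real.exp_pos (c * t), Real.exp_pos (|c| * T)]
      have h4 : Real.exp (c * t) * deriv u t ≤
          Real.exp (c * t) * (Real.exp (|c| * T) * (ρ / ε)) := by
        refine le_trans (le_trans hmono h3) (le_of_eq ?_); ring
      have h5 := Real.exp_pos (c * t)
      have h6 := (mul_le_mul_iff_of_pos_left h5).mp h4
      have heq : ρ * Real.exp (|c| * T) / ε = Real.exp (|c| * T) * (ρ / ε) := by ring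
      linarith
  -- FTC over [σ+ε, τ-ε]
  set σ₀ := σ + ε with hσ₀
  set τ₀ := τ - ε with hτ₀
  have hle : σ₀ ≤ τ₀ := hord.le
  have hFderiv : ∀ t, HasDerivAt (fun s => deriv u s + c * u s)
      (deriv (deriv u) t + c * deriv u t) t :=
    fun t => ((hd2 t).hasDerivAt).add (((hd1 t).hasDerivAt).const_mul c)
  have hintble : IntervalIntegrable (fun t => deriv (deriv u) t + c * deriv u t)
      MeasureTheory.volume σ₀ τ₀ :=
    (hcont2.add (continuous_const.mul hcont1)).intervalIntegrable _ _
  have hFTC : ∫ t in σ₀..τ₀, (deriv (deriv u) t + c * deriv u t) =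
      (deriv u τ₀ + c * u τ₀) - (deriv u σ₀ + c * u σ₀) :=
    intervalIntegral.integral_eq_sub_of_hasDerivAt (fun t _ => hFderiv t) hintble
  have hptwise : ∀ t ∈ Set.Icc σ₀ τ₀, α ≤ -(deriv (deriv u) t + c * deriv u t) := by
    intro t ht
    have ha' : 0 ≤ a t := hapos t ⟨by linarith [ht.1], by linarith [ht.2]⟩
    have h1 : 0 ≤ lam * a t * g (u t) :=
      mul_nonneg (mul_nonneg hlam.le ha') (hgnn _ (hunn t))
    have h0 := hode t
    linarith
  have hmono : α * (τ₀ - σ₀) ≤ -((deriv u τ₀ + c * u τ₀) - (deriv u σ₀ + c * u σ₀)) := by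
    have h1 : ∫ _t in σ₀..τ₀, α = α * (τ₀ - σ₀) := by
      simp [intervalIntegral.integral_const]; ring
    have h2' : (∫ t in σ₀..τ₀, -(deriv (deriv u) t + c * deriv u t)) =
        -((deriv u τ₀ + c * u τ₀) - (deriv u σ₀ + c * u σ₀)) := by
      rw [intervalIntegral.integral_neg, hFTC]
    calc α * (τ₀ - σ₀) = ∫ _t in σ₀..τ₀, α := h1.symm
      _ ≤ ∫ t in σ₀..τ₀, -(deriv (deriv u) t + c * deriv u t) :=
        intervalIntegral.integral_mono_on hle (intervalIntegrable_const) hintble.neg hptwise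
      _ = _ := h2'
  -- finish
  have hb1 := key σ₀ le_rfl hle
  have hb2 := key τ₀ hle le_rfl
  rw [abs_le] at hb1 hb2
  have hu1 : u σ₀ ≤ ρ := hmaxle _ ⟨by linarith, by linarith⟩
  have hu2 : u τ₀ ≤ ρ := hmaxle _ ⟨by linarith, by linarith⟩
  have hc1 : c * u σ₀ ≤ |c| * ρ :=
    le_trans (mul_le_mul_of_nonneg_right (le_abs_self c) (hunn σ₀))
      (mul_le_mul_of_nonneg_left hu1 (abs_nonneg c))
  have hc2 : -(c * u τ₀) ≤ |c| * ρ := by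
    have : -c * u τ₀ ≤ |c| * u τ₀ :=
      mul_le_mul_of_nonneg_right (neg_le_abs c) (hunn τ₀)
    have := le_trans this (mul_le_mul_of_nonneg_left hu2 (abs_nonneg c))
    linarith
  have : α * (τ₀ - σ₀) ≤ 2 * (ρ * Real.exp (|c| * T) / ε) + 2 * (|c| * ρ) := by
    clear_value v σ₀ τ₀
    linarith [hmono, hb1.1, hb1.2, hb2.1, hb2.2, hc1, hc2]
  calc α * ((τ - ε) - (σ + ε)) = α * (τ₀ - σ₀) := by rw [hσ₀, hτ₀]
    _ ≤ 2 * (ρ * Real.exp (|c| * T) / ε) + 2 * (|c| * ρ) := this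
    _ = 2 * ρ * Real.exp (|c| * T) / ε + 2 * |c| * ρ := by ring
end

section
/- Let z : [0,T] → ℝ be C^1, T-periodic (z(0) = z(T)), with z(t*) = 0 for some t*, satisfying z' + c z = -b(t) z² - a(t) where |b(t)| ≤ νD for all t. Fix M > e^{|c|T}‖a‖_{L¹} and suppose νD < (M - e^{|c|T}‖a‖_{L¹})/(M² T e^{|c|T}). Then ‖z‖_∞ ≤ M. -/
theorem stmt10 (T c ν D M : ℝ) (hT : 0 < T) (hν : 0 < ν) (hD : 0 < D)
    (a b : ℝ → ℝ) (ha : Continuous a) (hb : Continuous b)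
    (hbD : ∀ t ∈ Set.Icc (0:ℝ) T, |b t| ≤ ν * D)
    (z : ℝ → ℝ) (hz : ContDiff ℝ 1 z) (hzper : z 0 = z T)
    (t₀ : ℝ) (ht₀ : t₀ ∈ Set.Icc (0:ℝ) T) (hz0 : z t₀ = 0)
    (hode : ∀ t ∈ Set.Icc (0:ℝ) T,
      deriv z t + c * z t = -(b t) * (z t) ^ 2 - a t)
    (hM : Real.exp (|c| * T) * (∫ t in (0:ℝ)..T, |a t|) < M)
    (hsmall : ν * D < (M - Real.exp (|c| * T) * ∫ t in (0:ℝ)..T, |a t|)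
      / (M ^ 2 * T * Real.exp (|c| * T))) :
    ∀ t ∈ Set.Icc (0:ℝ) T, |z t| ≤ M := by
  set A := ∫ t in (0:ℝ)..T, |a t| with hAdef
  set E := Real.exp (|c| * T) with hEdef
  have hE0 : (0:ℝ) < E := Real.exp_pos _
  have hA0 : 0 ≤ A := intervalIntegral.integral_nonneg hT.le (fun s _ => abs_nonneg _)
  have hM0 : 0 < M := lt_of_le_of_lt (by positivity) hM
  have hzc : Continuous z := hz.continuous
  have hzd : Differentiable ℝ z := hz.differentiable one_ne_zero
  have hlt : E * (ν * D * M ^ 2 * T + A) < M := by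
    have h1 : 0 < M ^ 2 * T * E := by positivity
    rw [lt_div_iff₀ h1] at hsmall
    nlinarith [hsmall]
  have hfc : Continuous (fun s => Real.exp (c*s) * (-(b s) * (z s)^2 - a s)) := by
    fun_prop
  -- FTC / variation of constants
  have ftc : ∀ u ∈ Set.Icc (0:ℝ) T, Real.exp (c*u) * z u
      = ∫ s in t₀..u, Real.exp (c*s) * (-(b s) * (z s)^2 - a s) := by
    intro u hu
    have hsub : Set.uIcc t₀ u ⊆ Set.Icc 0 T := by
      intro s hs
      rcases Set.mem_uIcc.1 hs with h | h
      · exact ⟨ht₀.1.trans h.1, h.2.trans hu.2⟩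
      · exact ⟨hu.1.trans h.1, h.2.trans ht₀.2⟩
    have hders : ∀ s ∈ Set.uIcc t₀ u, HasDerivAt (fun r => Real.exp (c*r) * z r)
        (Real.exp (c*s) * (-(b s) * (z s)^2 - a s)) s := by
      intro s hs
      have h1 : HasDerivAt (fun r : ℝ => Real.exp (c*r)) (Real.exp (c*s) * (c*1)) s :=
        ((hasDerivAt_id s).const_mul c).exp
      have h2 : HasDerivAt z (deriv z s) s := (hzd s).hasDerivAt
      have h3 := h1.mul h2
      refine h3.congr_deriv ?_
      rw [← hode s (hsub hs)]
      ring
    have hint : IntervalIntegrable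
        (fun s => Real.exp (c*s) * (-(b s) * (z s)^2 - a s)) MeasureTheory.volume t₀ u :=
      hfc.intervalIntegrable _ _
    rw [intervalIntegral.integral_eq_sub_of_hasDerivAt hders hint, hz0, mul_zero, sub_zero]
  -- bound for the integral on a subinterval where |z| ≤ M
  have ibnd : ∀ u ∈ Set.Icc (0:ℝ) T, ∀ l r : ℝ, 0 ≤ l → l ≤ r → r ≤ T →
      (∀ s ∈ Set.Icc l r, |z s| ≤ M) →
      |∫ s in l..r, Real.exp (c*s) * (-(b s) * (z s)^2 - a s)|
        ≤ Real.exp (c*u) * (E * (ν*D*M^2*T + A)) := by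
    intro u hu l r hl hlr hr hbnd
    have habs := intervalIntegral.abs_integral_le_integral_abs
      (f := fun s => Real.exp (c*s) * (-(b s) * (z s)^2 - a s)) (μ := MeasureTheory.volume) hlr
    have hpt : ∀ s ∈ Set.Icc l r, |Real.exp (c*s) * (-(b s) * (z s)^2 - a s)|
        ≤ Real.exp (c*u) * E * (ν*D*M^2 + |a s|) := by
      intro s hs
      have hsIcc : s ∈ Set.Icc (0:ℝ) T := ⟨hl.trans hs.1, hs.2.trans hr⟩
      rw [abs_mul, Real.abs_exp]
      have h1 : |(-(b s) * (z s)^2 - a s)| ≤ ν*D*M^2 + |a s| := by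
        have h5 : |(-(b s) * (z s)^2 - a s)| ≤ |(-(b s)) * (z s)^2| + |a s| := by
          rw [sub_eq_add_neg]
          exact (abs_add_le _ _).trans (by rw [abs_neg])
        have h4 : |(-(b s)) * (z s)^2| ≤ ν*D*M^2 := by
          rw [abs_mul, abs_neg]
          have h6 : |(z s)^2| = |z s|^2 := abs_pow _ _
          rw [h6]
          exact mul_le_mul (hbD s hsIcc)
            (pow_le_pow_left₀ (abs_nonneg _) (hbnd s hs) 2)
            (by positivity) (by positivity)
        linarith
      have h2 : Real.exp (c*s) ≤ Real.exp (c*u) * E := by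
        rw [← Real.exp_add]
        apply Real.exp_le_exp.2
        have h7 : |c*(s-u)| ≤ |c| * T := by
          rw [abs_mul]
          apply mul_le_mul_of_nonneg_left _ (abs_nonneg c)
          rw [abs_sub_le_iff]
          constructor <;> [skip; skip] <;>
            [linarith [hsIcc.1, hsIcc.2, hu.1, hu.2]; linarith [hsIcc.1, hsIcc.2, hu.1, hu.2]]
        have h8 : c*s - c*u ≤ |c| * T := by
          calc c*s - c*u = c*(s-u) := by ring
            _ ≤ |c*(s-u)| := le_abs_self _
            _ ≤ |c| * T := h7
        linarith
      exact mul_le_mul h2 h1 (abs_nonneg _) (by positivity)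
    have hmono := intervalIntegral.integral_mono_on (μ := MeasureTheory.volume) hlr
      ((hfc.abs).intervalIntegrable _ _)
      (((continuous_const.mul (continuous_const.add (ha.abs)))).intervalIntegrable _ _)
      hpt
    have hIa : (∫ s in l..r, |a s|) ≤ A := by
      apply intervalIntegral.integral_mono_interval hl hlr hr
      · filter_upwards with s using abs_nonneg _
      · exact (ha.abs).intervalIntegrable _ _
    have hR : (∫ s in l..r, Real.exp (c*u) * E * (ν*D*M^2 + |a s|))
        = Real.exp (c*u) * E * (ν*D*M^2 * (r-l) + ∫ s in l..r, |a s|) := by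
      rw [intervalIntegral.integral_const_mul,
        intervalIntegral.integral_add intervalIntegrable_const ((ha.abs).intervalIntegrable _ _),
        intervalIntegral.integral_const, smul_eq_mul]
      ring
    have hfin : ν*D*M^2 * (r-l) + (∫ s in l..r, |a s|) ≤ ν*D*M^2*T + A := by
      have h9 : ν*D*M^2 * (r-l) ≤ ν*D*M^2 * T :=
        mul_le_mul_of_nonneg_left (by linarith) (by positivity)
      linarith
    calc |∫ s in l..r, Real.exp (c*s) * (-(b s) * (z s)^2 - a s)|
        ≤ ∫ s in l..r, |Real.exp (c*s) * (-(b s) * (z s)^2 - a s)| := habs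
      _ ≤ ∫ s in l..r, Real.exp (c*u) * E * (ν*D*M^2 + |a s|) := hmono
      _ = Real.exp (c*u) * E * (ν*D*M^2 * (r-l) + ∫ s in l..r, |a s|) := hR
      _ ≤ Real.exp (c*u) * (E * (ν*D*M^2*T + A)) := by
          rw [mul_assoc]
          exact mul_le_mul_of_nonneg_left
            (mul_le_mul_of_nonneg_left hfin hE0.le) (Real.exp_pos _).le
  -- key pointwise estimate
  have key : ∀ u ∈ Set.Icc (0:ℝ) T, (∀ s ∈ Set.uIcc t₀ u, |z s| ≤ M) →
      |z u| ≤ E * (ν*D*M^2*T + A) := by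
    intro u hu hbnd
    have heq := ftc u hu
    have hpos : (0:ℝ) < Real.exp (c*u) := Real.exp_pos _
    have hgoal : Real.exp (c*u) * |z u| ≤ Real.exp (c*u) * (E * (ν*D*M^2*T + A)) := by
      rcases le_total t₀ u with h | h
      · have hb2 : ∀ s ∈ Set.Icc t₀ u, |z s| ≤ M := by
          intro s hs
          exact hbnd s (by rwa [Set.uIcc_of_le h])
        have h10 := ibnd u hu t₀ u ht₀.1 h hu.2 hb2
        rw [← heq, abs_mul, Real.abs_exp] at h10
        exact h10
      · have hb2 : ∀ s ∈ Set.Icc u t₀, |z s| ≤ M := by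
          intro s hs
          exact hbnd s (by rwa [Set.uIcc_of_ge h])
        have h10 := ibnd u hu u t₀ hu.1 h ht₀.2 hb2
        rw [intervalIntegral.integral_symm, abs_neg, ← heq, abs_mul, Real.abs_exp] at h10
        exact h10
    exact le_of_mul_le_mul_left hgoal hpos
  -- contradiction argument
  by_contra hcon
  push_neg at hcon
  obtain ⟨t₁, ht₁, hgt⟩ := hcon
  have hzM : IsClosed {s : ℝ | |z s| ≤ M} := isClosed_le hzc.abs continuous_const
  obtain ⟨u, hu, hub, hMu⟩ : ∃ u ∈ Set.Icc (0:ℝ) T,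
      (∀ s ∈ Set.uIcc t₀ u, |z s| ≤ M) ∧ M ≤ |z u| := by
    rcases le_total t₀ t₁ with h | h
    · set S := {s ∈ Set.Icc t₀ t₁ | M ≤ |z s|} with hS
      have hclosed : IsClosed S := isClosed_Icc.inter (isClosed_le continuous_const hzc.abs)
      have hne : t₁ ∈ S := ⟨⟨h, le_refl t₁⟩, hgt.le⟩
      have hbdd : BddBelow S := ⟨t₀, fun s hs => hs.1.1⟩
      set u := sInf S with hudef
      have huS : u ∈ S := hclosed.csInf_mem ⟨t₁, hne⟩ hbdd
      have hut0 : t₀ ≤ u := le_csInf ⟨t₁, hne⟩ (fun s hs => hs.1.1)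
      have hut1 : u ≤ t₁ := csInf_le hbdd hne
      have hIco : ∀ s ∈ Set.Ico t₀ u, |z s| ≤ M := by
        intro s hs
        by_contra hs'
        push_neg at hs'
        have hsS : s ∈ S := ⟨⟨hs.1, hs.2.le.trans hut1⟩, hs'.le⟩
        exact absurd (csInf_le hbdd hsS) (not_le.2 hs.2)
      have hzuM : |z u| ≤ M := by
        rcases eq_or_lt_of_le hut0 with heq | hlt'
        · rw [← heq, hz0, abs_zero]; exact hM0.le
        · have hcl : u ∈ closure (Set.Ico t₀ u) := by
            rw [closure_Ico hlt'.ne]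
            exact ⟨hut0, le_refl u⟩
          exact hzM.closure_subset (closure_mono (fun s hs => hIco s hs) hcl)
      refine ⟨u, ⟨ht₀.1.trans hut0, hut1.trans ht₁.2⟩, ?_, huS.2⟩
      intro s hs
      rw [Set.uIcc_of_le hut0] at hs
      rcases lt_or_eq_of_le hs.2 with hlt2 | heq2
      · exact hIco s ⟨hs.1, hlt2⟩
      · rw [heq2]; exact hzuM
    · set S := {s ∈ Set.Icc t₁ t₀ | M ≤ |z s|} with hS
      have hclosed : IsClosed S := isClosed_Icc.inter (isClosed_le continuous_const hzc.abs)
      have hne : t₁ ∈ S := ⟨⟨le_refl t₁, h⟩, hgt.le⟩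
      have hbdd : BddAbove S := ⟨t₀, fun s hs => hs.1.2⟩
      set u := sSup S with hudef
      have huS : u ∈ S := hclosed.csSup_mem ⟨t₁, hne⟩ hbdd
      have hut0 : u ≤ t₀ := csSup_le ⟨t₁, hne⟩ (fun s hs => hs.1.2)
      have hut1 : t₁ ≤ u := le_csSup hbdd hne
      have hIoc : ∀ s ∈ Set.Ioc u t₀, |z s| ≤ M := by
        intro s hs
        by_contra hs'
        push_neg at hs'
        have hsS : s ∈ S := ⟨⟨hut1.trans hs.1.le, hs.2⟩, hs'.le⟩
        exact absurd (le_csSup hbdd hsS) (not_le.2 hs.1)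
      have hzuM : |z u| ≤ M := by
        rcases eq_or_lt_of_le hut0 with heq | hlt'
        · rw [heq, hz0, abs_zero]; exact hM0.le
        · have hcl : u ∈ closure (Set.Ioc u t₀) := by
            rw [closure_Ioc hlt'.ne]
            exact ⟨le_refl u, hut0⟩
          exact hzM.closure_subset (closure_mono (fun s hs => hIoc s hs) hcl)
      refine ⟨u, ⟨ht₁.1.trans hut1, hut0.trans ht₀.2⟩, ?_, huS.2⟩
      intro s hs
      rw [Set.uIcc_of_ge hut0] at hs
      rcases lt_or_eq_of_le hs.1 with hlt2 | heq2
      · exact hIoc s ⟨hlt2, hs.2⟩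
      · rw [← heq2]; exact hzuM
  have hfin := key u hu hub
  linarith [hMu.trans hfin]
end

section
/- Let J ⊆ ℝ be an interval, g : J → (0,∞) continuously differentiable with bounded derivative, a : ℝ → ℝ continuous T-periodic with ∫₀ᵀ a(t) dt < 0, and c ∈ ℝ. There exists ω* > 0 (depending only on c, T, a) such that if ν · sup_{s∈J}|g'(s)| < ω*, then there is no C^2 T-periodic solution u of u'' + c u' + ν a(t) g(u) = 0 with u(t) ∈ J for all t. -/
open Set Function intervalIntegral

set_option maxHeartbeats 1000000

theorem stmt11 (T c : ℝ) (hT : 0 < T)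
    (a : ℝ → ℝ) (ha : Continuous a) (haP : Function.Periodic a T)
    (haneg : (∫ t in (0:ℝ)..T, a t) < 0) :
    ∃ ω > (0:ℝ), ∀ (J : Set ℝ) (g : ℝ → ℝ) (D ν : ℝ),
      ContDiff ℝ 1 g → (∀ s ∈ J, 0 < g s) → (∀ s ∈ J, |deriv g s| ≤ D) →
      0 < ν → ν * D < ω →
      ¬ ∃ u : ℝ → ℝ, ContDiff ℝ 2 u ∧ Function.Periodic u T ∧ (∀ t, u t ∈ J) ∧
        ∀ t, deriv (deriv u) t + c * deriv u t + ν * a t * g (u t) = 0 := by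
  set Ia : ℝ := ∫ t in (0:ℝ)..T, a t with hIa
  set A : ℝ := ∫ t in (0:ℝ)..T, |a t| with hA
  have hA0 : 0 ≤ A := intervalIntegral.integral_nonneg hT.le (fun x _ => abs_nonneg _)
  set E : ℝ := Real.exp (|c| * T) with hE
  have hE1 : 1 ≤ E := Real.one_le_exp (by positivity)
  have hE0 : 0 < E := lt_of_lt_of_le one_pos hE1
  set M : ℝ := E * E * A + 1 with hM
  have hM1 : 1 ≤ M := by nlinarith
  have hM0 : 0 < M := lt_of_lt_of_le one_pos hM1
  refine ⟨min ((-Ia) / (M ^ 2 * T)) (1 / (E * E * T * M ^ 2)), ?_, ?_⟩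
  · have h1 : 0 < -Ia := by linarith
    apply lt_min <;> positivity
  rintro J g D ν hg hgJ hgD hν hνD ⟨u, hu, huP, huJ, hode⟩
  have hων1 : ν * D * (M ^ 2 * T) < -Ia := by
    have h1 : ν * D < (-Ia) / (M ^ 2 * T) := lt_of_lt_of_le hνD (min_le_left _ _)
    have h2 : 0 < M ^ 2 * T := by positivity
    calc ν * D * (M ^ 2 * T) < (-Ia) / (M ^ 2 * T) * (M ^ 2 * T) := by
          exact mul_lt_mul_of_pos_right h1 h2
      _ = -Ia := by field_simp
  have hων2 : ν * D * (E * E * T * M ^ 2) < 1 := by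
    have h1 : ν * D < 1 / (E * E * T * M ^ 2) := lt_of_lt_of_le hνD (min_le_right _ _)
    have h2 : 0 < E * E * T * M ^ 2 := by positivity
    calc ν * D * (E * E * T * M ^ 2) < 1 / (E * E * T * M ^ 2) * (E * E * T * M ^ 2) := by
          exact mul_lt_mul_of_pos_right h1 h2
      _ = 1 := by field_simp
  have hD0 : 0 ≤ D := le_trans (abs_nonneg _) (hgD _ (huJ 0))
  -- regularity facts
  have huC : Continuous u := hu.continuous
  have hud : Differentiable ℝ u := hu.differentiable (by norm_num)
  have hu1 : ContDiff ℝ 1 (deriv u) := by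
    have h2 : ContDiff ℝ ((1 : ℕ) + 1) u := by exact_mod_cast hu
    exact (contDiff_succ_iff_deriv.mp h2).2.2
  have hu'C : Continuous (deriv u) := hu1.continuous
  have hu'd : Differentiable ℝ (deriv u) := hu1.differentiable one_ne_zero
  have hgC : Continuous g := hg.continuous
  have hgd : Differentiable ℝ g := hg.differentiable one_ne_zero
  have hg'C : Continuous (deriv g) := hg.continuous_deriv le_rfl
  have hgu : ∀ t, 0 < g (u t) := fun t => hgJ _ (huJ t)
  have hgu0 : ∀ t, ν * g (u t) ≠ 0 := fun t => ne_of_gt (mul_pos hν (hgu t))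
  -- the function z
  set z : ℝ → ℝ := fun t => deriv u t / (ν * g (u t)) with hz
  have hzC : Continuous z := hu'C.div (continuous_const.mul (hgC.comp huC)) hgu0
  have hu'P : Function.Periodic (deriv u) T := by
    intro x
    have : (fun y => u (y + T)) = u := funext fun y => huP y
    calc deriv u (x + T) = deriv (fun y => u (y + T)) x := (deriv_comp_add_const u T x).symm
      _ = deriv u x := by rw [this]
  have hzP : Function.Periodic z T := by
    intro x; simp only [hz]; rw [hu'P x, huP x]
  -- derivative of z
  set w : ℝ → ℝ := fun t => -(c * z t) - a t - ν * deriv g (u t) * z t ^ 2 with hw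
  have hwC : Continuous w := by
    apply Continuous.sub
    apply Continuous.sub
    · exact (continuous_const.mul hzC).neg
    · exact ha
    · exact (continuous_const.mul (hg'C.comp huC)).mul (hzC.pow 2)
  have hz' : ∀ t, HasDerivAt z (w t) t := by
    intro t
    have hut : HasDerivAt u (deriv u t) t := (hud t).hasDerivAt
    have hu't : HasDerivAt (deriv u) (deriv (deriv u) t) t := (hu'd t).hasDerivAt
    have hgt : HasDerivAt g (deriv g (u t)) (u t) := (hgd (u t)).hasDerivAt
    have hcomp : HasDerivAt (fun s => ν * g (u s)) (ν * (deriv g (u t) * deriv u t)) t :=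
      (hgt.comp t hut).const_mul ν
    have hdiv := hu't.div hcomp (hgu0 t)
    refine hdiv.congr_deriv ?_; symm
    have heq : deriv (deriv u) t = -(c * deriv u t) - ν * a t * g (u t) := by
      have := hode t; linarith
    rw [hw, heq, hz]
    have h1 : g (u t) ≠ 0 := (hgu t).ne'
    have h2 : ν ≠ 0 := hν.ne'
    field_simp
  -- maximum point of u
  obtain ⟨t0, ht0mem, ht0max⟩ :=
    (isCompact_Icc : IsCompact (Icc (0:ℝ) T)).exists_isMaxOn ⟨0, by simp [hT.le]⟩ huC.continuousOn
  have hmax : ∀ s, u s ≤ u t0 := by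
    intro s
    obtain ⟨y, hy, hy2⟩ := huP.exists_mem_Ico₀ hT s
    rw [hy2]
    exact ht0max (Ico_subset_Icc_self hy)
  have hz0 : z t0 = 0 := by
    have hloc : IsLocalMax u t0 := Filter.Eventually.of_forall hmax
    simp [hz, hloc.deriv_eq_zero]
  -- positivity of g on intermediate values
  have hgpos' : ∀ r s : ℝ, ∀ x ∈ uIcc (u r) (u s), 0 < g x := by
    intro r s x hx
    obtain ⟨τ, _, hτ⟩ := intermediate_value_uIcc huC.continuousOn hx
    rw [← hτ]; exact hgu τ
  -- |a| is periodic with the same integral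
  have haPabs : Function.Periodic (fun t => |a t|) T := fun x => by simp [haP x]
  have habs_int : ∀ s r : ℝ, IntervalIntegrable (fun t => |a t|) MeasureTheory.volume s r :=
    fun s r => (ha.abs).intervalIntegrable s r
  -- key a priori bound : |z| < M on [t0, t0 + T]
  have hzM : ∀ t ∈ Icc t0 (t0 + T), |z t| < M := by
    by_contra hcon
    push_neg at hcon
    obtain ⟨t2, ht2, hMt2⟩ := hcon
    set Sset : Set ℝ := {t | t ∈ Icc t0 (t0 + T) ∧ M ≤ |z t|} with hSset
    have hSclosed : IsClosed Sset := by
      have : Sset = Icc t0 (t0 + T) ∩ {t | M ≤ |z t|} := rfl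
      rw [this]
      exact isClosed_Icc.inter (isClosed_le continuous_const hzC.abs)
    have hSne : Sset.Nonempty := ⟨t2, ht2, hMt2⟩
    have hSbdd : BddBelow Sset := ⟨t0, fun x hx => hx.1.1⟩
    set t1 : ℝ := sInf Sset with ht1def
    have ht1S : t1 ∈ Sset := hSclosed.csInf_mem hSne hSbdd
    obtain ⟨ht1mem, hMt1⟩ := ht1S
    have ht01 : t0 < t1 := by
      rcases lt_or_eq_of_le ht1mem.1 with h | h
      · exact h
      · exfalso; rw [← h] at hMt1; rw [hz0] at hMt1; simp at hMt1; linarith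
    have hlt : ∀ s ∈ Ico t0 t1, |z s| < M := by
      intro s hs
      by_contra hns
      push_neg at hns
      have : s ∈ Sset := ⟨⟨hs.1, le_trans hs.2.le ht1mem.2⟩, hns⟩
      have := csInf_le hSbdd this
      exact absurd this (not_le.mpr hs.2)
    have ht1le : |z t1| ≤ M := by
      have htend : Filter.Tendsto (fun r => |z r|) (nhdsWithin t1 (Iio t1)) (nhds (|z t1|)) :=
        (hzC.abs.continuousAt).continuousWithinAt.tendsto
      refine le_of_tendsto htend ?_
      filter_upwards [Ioo_mem_nhdsLT_of_mem (⟨ht01, le_refl t1⟩ : t1 ∈ Ioc t0 t1)] with r hr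
      exact (hlt r ⟨hr.1.le, hr.2⟩).le
    have hle : ∀ s ∈ Icc t0 t1, |z s| ≤ M := by
      intro s hs
      rcases lt_or_eq_of_le hs.2 with h | h
      · exact (hlt s ⟨hs.1, h⟩).le
      · rw [h]; exact ht1le
    -- the integral bound
    set v : ℝ → ℝ := fun s => Real.exp (c * (s - t0)) * z s with hv
    have hv' : ∀ s, HasDerivAt v (Real.exp (c * (s - t0)) * (-(a s) - ν * deriv g (u s) * z s ^ 2)) s := by
      intro s
      have h1 : HasDerivAt (fun r : ℝ => c * (r - t0)) c s := by
        simpa using ((hasDerivAt_id s).sub_const t0).const_mul c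
      have h2 : HasDerivAt (fun r => Real.exp (c * (r - t0))) (Real.exp (c * (s - t0)) * c) s := by
        simpa using h1.exp
      have h3 := h2.mul (hz' s)
      refine h3.congr_deriv ?_; symm
      rw [hw]; ring
    have hexp_le : ∀ s ∈ Icc t0 (t0 + T), Real.exp (c * (s - t0)) ≤ E := by
      intro s hs
      rw [hE]
      apply Real.exp_le_exp.mpr
      have h1 : 0 ≤ s - t0 := by linarith [hs.1]
      have h2 : s - t0 ≤ T := by linarith [hs.2]
      calc c * (s - t0) ≤ |c| * (s - t0) := by
            apply mul_le_mul_of_nonneg_right (le_abs_self c) h1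
        _ ≤ |c| * T := by apply mul_le_mul_of_nonneg_left h2 (abs_nonneg c)
    have hv'int : IntervalIntegrable (fun s => Real.exp (c * (s - t0)) * (-(a s) - ν * deriv g (u s) * z s ^ 2)) MeasureTheory.volume t0 t1 := by
      apply Continuous.intervalIntegrable
      exact ((Real.continuous_exp.comp (by fun_prop)).mul
        ((ha.neg).sub ((continuous_const.mul (hg'C.comp huC)).mul (hzC.pow 2))))
    have hFTC : v t1 - v t0 = ∫ s in t0..t1, Real.exp (c * (s - t0)) * (-(a s) - ν * deriv g (u s) * z s ^ 2) := by
      rw [intervalIntegral.integral_eq_sub_of_hasDerivAt (fun s _ => hv' s) hv'int]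
    have hvt0 : v t0 = 0 := by simp [hv, hz0]
    have hbound : |v t1| ≤ E * A + E * (ν * D * M ^ 2) * T := by
      have h1 : |v t1| ≤ ∫ s in t0..t1, |Real.exp (c * (s - t0)) * (-(a s) - ν * deriv g (u s) * z s ^ 2)| := by
        rw [show v t1 = v t1 - v t0 by rw [hvt0]; ring, hFTC]
        exact intervalIntegral.abs_integral_le_integral_abs ht01.le
      have h2 : ∫ s in t0..t1, |Real.exp (c * (s - t0)) * (-(a s) - ν * deriv g (u s) * z s ^ 2)| ≤
          ∫ s in t0..t1, (E * |a s| + E * (ν * D * M ^ 2)) := by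
        apply intervalIntegral.integral_mono_on ht01.le
        · exact (hv'int.abs)
        · exact ((continuous_const.mul ha.abs).add continuous_const).intervalIntegrable _ _
        · intro s hs
          have hsmem : s ∈ Icc t0 (t0 + T) := ⟨hs.1, le_trans hs.2 ht1mem.2⟩
          rw [abs_mul, Real.abs_exp]
          have hz2 : z s ^ 2 ≤ M ^ 2 := by
            have h0 := hle s ⟨hs.1, hs.2⟩
            calc z s ^ 2 = |z s| ^ 2 := (sq_abs _).symm
              _ ≤ M ^ 2 := pow_le_pow_left₀ (abs_nonneg _) h0 2
          have hg' : |deriv g (u s)| ≤ D := hgD _ (huJ s)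
          have e2 : |ν * deriv g (u s) * z s ^ 2| ≤ ν * D * M ^ 2 := by
            rw [abs_mul, abs_mul, abs_of_pos hν, abs_of_nonneg (sq_nonneg (z s))]
            have s1 : ν * |deriv g (u s)| ≤ ν * D := mul_le_mul_of_nonneg_left hg' hν.le
            have s2 : ν * |deriv g (u s)| * z s ^ 2 ≤ ν * D * (z s ^ 2) :=
              mul_le_mul_of_nonneg_right s1 (sq_nonneg _)
            have s3 : ν * D * (z s ^ 2) ≤ ν * D * M ^ 2 :=
              mul_le_mul_of_nonneg_left hz2 (by positivity)
            linarith
          have hb1 : |(-(a s) - ν * deriv g (u s) * z s ^ 2)| ≤ |a s| + ν * D * M ^ 2 := by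
            calc |(-(a s) - ν * deriv g (u s) * z s ^ 2)|
                ≤ |(-(a s))| + |ν * deriv g (u s) * z s ^ 2| := abs_sub _ _
              _ ≤ |a s| + ν * D * M ^ 2 := by rw [abs_neg]; linarith
          calc Real.exp (c * (s - t0)) * |(-(a s) - ν * deriv g (u s) * z s ^ 2)| ≤
              E * (|a s| + ν * D * M ^ 2) := by
                apply mul_le_mul (hexp_le s hsmem) hb1 (abs_nonneg _) hE0.le
            _ = E * |a s| + E * (ν * D * M ^ 2) := by ring
      have h3 : ∫ s in t0..t1, (E * |a s| + E * (ν * D * M ^ 2)) =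
          E * (∫ s in t0..t1, |a s|) + E * (ν * D * M ^ 2) * (t1 - t0) := by
        rw [intervalIntegral.integral_add (f := fun s => E * |a s|) ((continuous_const.mul ha.abs).intervalIntegrable _ _)
          (intervalIntegrable_const), intervalIntegral.integral_const_mul,
          intervalIntegral.integral_const, smul_eq_mul]
        ring
      have h4 : ∫ s in t0..t1, |a s| ≤ A := by
        have hsub : ∫ s in t0..t1, |a s| ≤ ∫ s in t0..(t0 + T), |a s| := by
          apply intervalIntegral.integral_mono_interval (le_refl t0) ht01.le ht1mem.2
          · filter_upwards with x using abs_nonneg _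
          · exact habs_int _ _
        have hper : ∫ s in t0..(t0 + T), |a s| = A := by
          rw [hA]
          have := haPabs.intervalIntegral_add_eq t0 0
          simpa using this
        linarith
      have h5 : E * (ν * D * M ^ 2) * (t1 - t0) ≤ E * (ν * D * M ^ 2) * T := by
        have : t1 - t0 ≤ T := by linarith [ht1mem.2]
        have hnn : 0 ≤ E * (ν * D * M ^ 2) := by positivity
        exact mul_le_mul_of_nonneg_left this hnn
      calc |v t1| ≤ E * (∫ s in t0..t1, |a s|) + E * (ν * D * M ^ 2) * (t1 - t0) := by
            rw [← h3]; exact le_trans h1 h2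
        _ ≤ E * A + E * (ν * D * M ^ 2) * T := by
            have h6 := mul_le_mul_of_nonneg_left h4 hE0.le
            linarith
    -- conclude |z t1| < M
    have hzv : |z t1| ≤ E * |v t1| := by
      have : z t1 = Real.exp (-(c * (t1 - t0))) * v t1 := by
        rw [hv, ← mul_assoc, ← Real.exp_add]
        simp
      rw [this, abs_mul, Real.abs_exp]
      apply mul_le_mul_of_nonneg_right _ (abs_nonneg _)
      rw [hE]
      apply Real.exp_le_exp.mpr
      have h1 : 0 ≤ t1 - t0 := by linarith
      have h2 : t1 - t0 ≤ T := by linarith [ht1mem.2]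
      calc -(c * (t1 - t0)) ≤ |c| * (t1 - t0) := by
            have := neg_abs_le c
            nlinarith [abs_nonneg c]
        _ ≤ |c| * T := by apply mul_le_mul_of_nonneg_left h2 (abs_nonneg c)
    have hfinal : M < M := by
      calc M ≤ |z t1| := hMt1
        _ ≤ E * |v t1| := hzv
        _ ≤ E * (E * A + E * (ν * D * M ^ 2) * T) := by
            exact mul_le_mul_of_nonneg_left hbound hE0.le
        _ = E * E * A + ν * D * (E * E * T * M ^ 2) := by ring
        _ < E * E * A + 1 := by linarith
        _ = M := by rw [hM]
    exact absurd hfinal (lt_irrefl M)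
  -- Now the integral identities over [t0, t0 + T]
  have hguC : Continuous (fun t => (g (u t))⁻¹) :=
    (hgC.comp huC).inv₀ (fun t => (hgu t).ne')
  -- ∫ z = 0 via antiderivative of 1/g
  have hIz : (∫ t in t0..(t0 + T), z t) = 0 := by
    set F : ℝ → ℝ := fun y => ∫ x in (u t0)..y, (g x)⁻¹ with hF
    have hFd : ∀ t : ℝ, HasDerivAt (fun s => F (u s)) ((g (u t))⁻¹ * deriv u t) t := by
      intro t
      have hint : IntervalIntegrable (fun x => (g x)⁻¹) MeasureTheory.volume (u t0) (u t) := by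
        apply ContinuousOn.intervalIntegrable
        exact (hgC.continuousOn).inv₀ (fun x hx => (hgpos' t0 t x hx).ne')
      have hmeas : StronglyMeasurableAtFilter (fun x => (g x)⁻¹) (nhds (u t)) MeasureTheory.volume :=
        ⟨Set.univ, Filter.univ_mem, (hgC.measurable.inv).aestronglyMeasurable⟩
      have hcont : ContinuousAt (fun x => (g x)⁻¹) (u t) :=
        (hgC.continuousAt).inv₀ (hgu t).ne'
      have hFat : HasDerivAt F ((g (u t))⁻¹) (u t) :=
        intervalIntegral.integral_hasDerivAt_right hint hmeas hcont
      exact hFat.comp t (hud t).hasDerivAt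
    have hintg : IntervalIntegrable (fun t => (g (u t))⁻¹ * deriv u t) MeasureTheory.volume t0 (t0 + T) :=
      (hguC.mul hu'C).intervalIntegrable _ _
    have h1 : (∫ t in t0..(t0 + T), (g (u t))⁻¹ * deriv u t) = F (u (t0 + T)) - F (u t0) :=
      intervalIntegral.integral_eq_sub_of_hasDerivAt (fun t _ => hFd t) hintg
    have h2 : u (t0 + T) = u t0 := huP t0
    have h3 : (∫ t in t0..(t0 + T), (g (u t))⁻¹ * deriv u t) = 0 := by
      rw [h1, h2]; ring
    have h4 : ∀ t, z t = ν⁻¹ * ((g (u t))⁻¹ * deriv u t) := by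
      intro t
      rw [hz]
      field_simp
    calc (∫ t in t0..(t0 + T), z t) = ∫ t in t0..(t0 + T), ν⁻¹ * ((g (u t))⁻¹ * deriv u t) := by
          apply intervalIntegral.integral_congr
          intro t _
          exact h4 t
      _ = ν⁻¹ * ∫ t in t0..(t0 + T), (g (u t))⁻¹ * deriv u t := by
          rw [intervalIntegral.integral_const_mul]
      _ = 0 := by rw [h3]; ring
  -- ∫ w = 0 since z is periodic
  have hIw : (∫ t in t0..(t0 + T), w t) = 0 := by
    have h1 : (∫ t in t0..(t0 + T), w t) = z (t0 + T) - z t0 :=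
      intervalIntegral.integral_eq_sub_of_hasDerivAt (fun t _ => hz' t)
        (hwC.intervalIntegrable _ _)
    rw [h1, hzP t0, sub_self]
  -- split the integral of w
  have hIa' : (∫ t in t0..(t0 + T), a t) = Ia := by
    rw [hIa]
    have := haP.intervalIntegral_add_eq t0 0
    simpa using this
  have hq : (∫ t in t0..(t0 + T), ν * deriv g (u t) * z t ^ 2) = -Ia := by
    have hsplit : (∫ t in t0..(t0 + T), w t) =
        -(c * (∫ t in t0..(t0 + T), z t)) - (∫ t in t0..(t0 + T), a t)
          - (∫ t in t0..(t0 + T), ν * deriv g (u t) * z t ^ 2) := by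
      have i1 : IntervalIntegrable (fun t => -(c * z t)) MeasureTheory.volume t0 (t0 + T) :=
        ((continuous_const.mul hzC).neg).intervalIntegrable _ _
      have i2 : IntervalIntegrable a MeasureTheory.volume t0 (t0 + T) :=
        ha.intervalIntegrable _ _
      have i3 : IntervalIntegrable (fun t => ν * deriv g (u t) * z t ^ 2) MeasureTheory.volume t0 (t0 + T) :=
        ((continuous_const.mul (hg'C.comp huC)).mul (hzC.pow 2)).intervalIntegrable _ _
      rw [hw]
      rw [intervalIntegral.integral_sub (i1.sub i2) i3, intervalIntegral.integral_sub i1 i2,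
        intervalIntegral.integral_neg, intervalIntegral.integral_const_mul]
    rw [hsplit, hIz, hIa'] at hIw
    linarith
  -- final contradiction
  have hub : (∫ t in t0..(t0 + T), ν * deriv g (u t) * z t ^ 2) ≤ ν * D * M ^ 2 * T := by
    have h1 : (∫ t in t0..(t0 + T), ν * deriv g (u t) * z t ^ 2) ≤
        ∫ t in t0..(t0 + T), ν * D * M ^ 2 := by
      apply intervalIntegral.integral_mono_on (by linarith)
      · exact ((continuous_const.mul (hg'C.comp huC)).mul (hzC.pow 2)).intervalIntegrable _ _
      · exact intervalIntegrable_const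
      · intro s hs
        have hz2 : z s ^ 2 ≤ M ^ 2 := by
          have h0 := (hzM s hs).le
          calc z s ^ 2 = |z s| ^ 2 := (sq_abs _).symm
            _ ≤ M ^ 2 := pow_le_pow_left₀ (abs_nonneg _) h0 2
        have hg' : |deriv g (u s)| ≤ D := hgD _ (huJ s)
        have hz2nn : (0:ℝ) ≤ z s ^ 2 := sq_nonneg _
        have s0 : deriv g (u s) ≤ |deriv g (u s)| := le_abs_self _
        have s1 : ν * deriv g (u s) ≤ ν * |deriv g (u s)| := mul_le_mul_of_nonneg_left s0 hν.le
        have s1' : ν * |deriv g (u s)| ≤ ν * D := mul_le_mul_of_nonneg_left hg' hν.le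
        have s2 : ν * deriv g (u s) * z s ^ 2 ≤ ν * D * (z s ^ 2) :=
          mul_le_mul_of_nonneg_right (le_trans s1 s1') hz2nn
        have s3 : ν * D * (z s ^ 2) ≤ ν * D * M ^ 2 :=
          mul_le_mul_of_nonneg_left hz2 (by positivity)
        linarith
    rw [intervalIntegral.integral_const, smul_eq_mul] at h1
    calc (∫ t in t0..(t0 + T), ν * deriv g (u t) * z t ^ 2) ≤ (t0 + T - t0) * (ν * D * M ^ 2) := h1
      _ = ν * D * M ^ 2 * T := by ring
  rw [hq] at hub
  have : ν * D * (M ^ 2 * T) = ν * D * M ^ 2 * T := by ring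
  linarith
end

section
/- Let g : [0,∞) → [0,∞) be continuously differentiable with g(0) = 0, g'(0) = 0, g'(∞) = 0, and let a be continuous T-periodic with ∫₀ᵀ a < 0. Then there exists λ* > 0 such that for every 0 < λ < λ*, the equation u'' + c u' + λ a(t) g(u) = 0 admits no positive C^2 T-periodic solution. -/
open Set Filter MeasureTheory intervalIntegral

set_option maxHeartbeats 1000000 in
theorem stmt13 (T c : ℝ) (hT : 0 < T)
    (g : ℝ → ℝ) (hg : ContDiff ℝ 1 g) (hg0 : g 0 = 0)
    (hgnn : ∀ s, 0 ≤ s → 0 ≤ g s) (hgpos : ∀ s > (0:ℝ), 0 < g s)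
    (hg'0 : deriv g 0 = 0)
    (hg'inf : Filter.Tendsto (deriv g) Filter.atTop (nhds 0))
    (a : ℝ → ℝ) (ha : Continuous a) (haP : Function.Periodic a T)
    (haneg : (∫ t in (0:ℝ)..T, a t) < 0) :
    ∃ lam0 > (0:ℝ), ∀ lam : ℝ, 0 < lam → lam < lam0 →
      ¬ ∃ u : ℝ → ℝ, ContDiff ℝ 2 u ∧ Function.Periodic u T ∧ (∀ t, 0 < u t) ∧
        ∀ t, deriv (deriv u) t + c * deriv u t + lam * a t * g (u t) = 0 := by
  have hgc : Continuous g := hg.continuous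
  have hgd : Differentiable ℝ g := hg.differentiable one_ne_zero
  have hg'c : Continuous (deriv g) := hg.continuous_deriv le_rfl
  -- a bound on |deriv g| on [0, ∞)
  obtain ⟨D, hD1, hD⟩ : ∃ D : ℝ, 1 ≤ D ∧ ∀ s : ℝ, 0 ≤ s → |deriv g s| ≤ D := by
    obtain ⟨R, hR⟩ := (Metric.tendsto_atTop.mp hg'inf 1 one_pos)
    obtain ⟨C, hC⟩ := (isCompact_Icc (a := (0:ℝ)) (b := max R 0)).exists_bound_of_continuousOn
      hg'c.continuousOn
    refine ⟨max C 1, le_max_right _ _, ?_⟩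
    intro s hs
    rcases le_total s (max R 0) with h | h
    · exact le_trans (by simpa using hC s ⟨hs, h⟩) (le_max_left _ _)
    · have h2 := hR s (le_trans (le_max_left _ _) h)
      rw [Real.dist_eq, sub_zero] at h2
      exact le_trans h2.le (le_max_right _ _)
  have hD0 : 0 < D := lt_of_lt_of_le one_pos hD1
  set Ia : ℝ := ∫ t in (0:ℝ)..T, |a t| with hIadef
  have hIa0 : 0 ≤ Ia := intervalIntegral.integral_nonneg hT.le (fun t _ => abs_nonneg _)
  set E : ℝ := Real.exp (|c| * T) with hEdef
  have hE1 : 1 ≤ E := Real.one_le_exp (by positivity)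
  have hE0 : 0 < E := lt_of_lt_of_le one_pos hE1
  set M : ℝ := E ^ 2 * Ia + 1 with hMdef
  have hM1 : 1 ≤ M := by nlinarith
  have hM0 : 0 < M := lt_of_lt_of_le one_pos hM1
  have hna : 0 < -∫ t in (0:ℝ)..T, a t := neg_pos.mpr haneg
  clear_value Ia E M
  refine ⟨min (1 / (2 * E ^ 2 * D * T * M ^ 2)) ((-∫ t in (0:ℝ)..T, a t) / (D * T * M ^ 2)),
    lt_min (by positivity) (by positivity), ?_⟩
  intro lam hlam hlamlt
  rintro ⟨u, hu, huP, hupos, hueq⟩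
  have hlam1 : lam * (2 * E ^ 2 * D * T * M ^ 2) < 1 := by
    have := lt_of_lt_of_le hlamlt (min_le_left _ _)
    rw [lt_div_iff₀ (by positivity)] at this
    linarith
  have hlam2 : lam * (D * T * M ^ 2) < -∫ t in (0:ℝ)..T, a t := by
    have := lt_of_lt_of_le hlamlt (min_le_right _ _)
    rw [lt_div_iff₀ (by positivity)] at this
    linarith
  -- basic facts about u
  have hu2 : Differentiable ℝ u ∧ ContDiff ℝ 1 (deriv u) := by
    have : ContDiff ℝ ((1 : ℕ) + 1) u := by exact_mod_cast hu
    rw [contDiff_succ_iff_deriv] at this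
    exact ⟨this.1, this.2.2⟩
  have hud : Differentiable ℝ u := hu2.1
  have hudc : Continuous (deriv u) := hu2.2.continuous
  have hud2 : Differentiable ℝ (deriv u) := hu2.2.differentiable one_ne_zero
  have hu'P : Function.Periodic (deriv u) T := by
    intro t
    have hfun : (fun x => u (x + T)) = u := funext huP
    calc deriv u (t + T) = deriv (fun x => u (x + T)) t := (deriv_comp_add_const u T t).symm
      _ = deriv u t := by rw [hfun]
  have hgu : ∀ t, 0 < g (u t) := fun t => hgpos _ (hupos t)
  -- maximum point
  obtain ⟨t₀, ht₀mem, ht₀max⟩ := isCompact_Icc.exists_isMaxOn (nonempty_Icc.mpr hT.le)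
    hud.continuous.continuousOn
  have hmax : ∀ t, u t ≤ u t₀ := by
    intro t
    have h1 : u (t - ⌊t / T⌋ * T) = u t := huP.sub_int_mul_eq ⌊t / T⌋
    rw [← h1]
    exact ht₀max ⟨Int.sub_floor_div_mul_nonneg t hT, (Int.sub_floor_div_mul_lt t hT).le⟩
  have hu't₀ : deriv u t₀ = 0 := by
    refine IsLocalMax.deriv_eq_zero ?_
    have hIsMax : IsMaxOn u univ t₀ := fun t _ => hmax t
    exact hIsMax.isLocalMax univ_mem
  -- the function y = u' / g(u)
  set y : ℝ → ℝ := fun t => deriv u t / g (u t) with hydef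
  have hyc : Continuous y := hudc.div (hgc.comp hud.continuous) (fun t => (hgu t).ne')
  have hyP : Function.Periodic y T := by
    intro t
    simp only [hydef, hu'P t, huP t]
  have hyt₀ : y t₀ = 0 := by simp [hydef, hu't₀]
  have hy' : ∀ t, HasDerivAt y (-(c * y t) - deriv g (u t) * (y t) ^ 2 - lam * a t) t := by
    intro t
    have h1 : HasDerivAt u (deriv u t) t := (hud t).hasDerivAt
    have h2 : HasDerivAt (deriv u) (deriv (deriv u) t) t := (hud2 t).hasDerivAt
    have h3 : HasDerivAt g (deriv g (u t)) (u t) := (hgd (u t)).hasDerivAt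
    have h4 : HasDerivAt (fun s => g (u s)) (deriv g (u t) * deriv u t) t := h3.comp t h1
    have h5 := h2.div h4 (hgu t).ne'
    refine (h5 : HasDerivAt y _ t).congr_deriv ?_
    have heq : deriv (deriv u) t = -(c * deriv u t) - lam * a t * g (u t) := by
      have := hueq t; linarith
    rw [heq]
    have hne := (hgu t).ne'
    simp only [hydef]
    field_simp [hydef]
    ring
  have hg'uc : Continuous fun t => deriv g (u t) := hg'c.comp hud.continuous
  -- the bootstrap bound
  have hz' : ∀ s, HasDerivAt (fun r => Real.exp (c * (r - t₀)) * y r)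
      (Real.exp (c * (s - t₀)) * (-(deriv g (u s) * (y s) ^ 2) - lam * a s)) s := by
    intro s
    have h0 : HasDerivAt (fun r : ℝ => c * (r - t₀)) c s := by
      have h := ((hasDerivAt_id s).sub_const t₀).const_mul c
      simpa using h
    have he : HasDerivAt (fun r => Real.exp (c * (r - t₀))) (Real.exp (c * (s - t₀)) * c) s :=
      h0.exp
    have hm := he.mul (hy' s)
    refine hm.congr_deriv ?_
    ring
  have hzc : Continuous fun s =>
      Real.exp (c * (s - t₀)) * (-(deriv g (u s) * (y s) ^ 2) - lam * a s) :=
    (Real.continuous_exp.comp (continuous_const.mul (continuous_id.sub continuous_const))).mul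
      ((hg'uc.mul (hyc.pow 2)).neg.sub (continuous_const.mul ha))
  have habsP : Function.Periodic (fun t => |a t|) T := haP.comp (fun x => |x|)
  have haIa : (∫ s in t₀..(t₀ + T), |a s|) = Ia := by
    have h := habsP.intervalIntegral_add_eq t₀ 0
    rw [hIadef]
    simpa using h
  have est : ∀ τ ∈ Icc t₀ (t₀ + T), (∀ s ∈ Icc t₀ τ, |y s| ≤ lam * M) →
      |y τ| ≤ E ^ 2 * (D * T * (lam * M) ^ 2 + lam * Ia) := by
    intro τ hτ hbound
    have hτ1 : t₀ ≤ τ := hτ.1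
    have hfund : (∫ s in t₀..τ,
        Real.exp (c * (s - t₀)) * (-(deriv g (u s) * (y s) ^ 2) - lam * a s))
        = Real.exp (c * (τ - t₀)) * y τ - Real.exp (c * (t₀ - t₀)) * y t₀ :=
      intervalIntegral.integral_eq_sub_of_hasDerivAt (fun s _ => hz' s)
        (hzc.intervalIntegrable _ _)
    have hexpb : ∀ s, t₀ ≤ s → s ≤ τ → Real.exp (c * (s - t₀)) ≤ E := by
      intro s hs1 hs2
      rw [hEdef]
      apply Real.exp_le_exp.mpr
      have h1 : |s - t₀| ≤ T := by
        rw [abs_of_nonneg (by linarith)]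
        linarith [hτ.2]
      calc c * (s - t₀) ≤ |c * (s - t₀)| := le_abs_self _
        _ = |c| * |s - t₀| := abs_mul _ _
        _ ≤ |c| * T := mul_le_mul_of_nonneg_left h1 (abs_nonneg c)
    -- pointwise bound on the norm of the derivative
    have hptw : ∀ s ∈ Icc t₀ τ,
        |Real.exp (c * (s - t₀)) * (-(deriv g (u s) * (y s) ^ 2) - lam * a s)|
          ≤ E * (D * (lam * M) ^ 2) + E * lam * |a s| := by
      intro s hs
      rw [abs_mul, Real.abs_exp]
      have h1 : |(-(deriv g (u s) * (y s) ^ 2) - lam * a s)|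
          ≤ D * (lam * M) ^ 2 + lam * |a s| := by
        have h2 : |deriv g (u s)| ≤ D := hD _ (hupos s).le
        have h3 : (y s) ^ 2 ≤ (lam * M) ^ 2 := by
          rw [← sq_abs (y s)]
          exact pow_le_pow_left₀ (abs_nonneg _) (hbound s hs) 2
        have h4 : |deriv g (u s) * (y s) ^ 2| ≤ D * (lam * M) ^ 2 := by
          rw [abs_mul, abs_of_nonneg (sq_nonneg (y s))]
          exact mul_le_mul h2 h3 (sq_nonneg _) hD0.le
        calc |(-(deriv g (u s) * (y s) ^ 2) - lam * a s)|
            ≤ |(-(deriv g (u s) * (y s) ^ 2))| + |lam * a s| := abs_sub _ _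
          _ ≤ D * (lam * M) ^ 2 + lam * |a s| := by
              have h5 : |lam * a s| = lam * |a s| := by
                rw [abs_mul, abs_of_nonneg hlam.le]
              rw [abs_neg, h5]
              exact add_le_add h4 le_rfl
      have he := hexpb s hs.1 hs.2
      have hexppos : (0:ℝ) < Real.exp (c * (s - t₀)) := Real.exp_pos _
      calc Real.exp (c * (s - t₀)) * |(-(deriv g (u s) * (y s) ^ 2) - lam * a s)|
          ≤ E * (D * (lam * M) ^ 2 + lam * |a s|) := by
            apply mul_le_mul he h1 (abs_nonneg _) hE0.le
        _ = E * (D * (lam * M) ^ 2) + E * lam * |a s| := by ring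
    have hnorm : |Real.exp (c * (τ - t₀)) * y τ|
        ≤ E * (D * T * (lam * M) ^ 2 + lam * Ia) := by
      rw [← sub_zero (Real.exp (c * (τ - t₀)) * y τ)]
      rw [show (0:ℝ) = Real.exp (c * (t₀ - t₀)) * y t₀ by simp [hyt₀], ← hfund]
      calc |∫ s in t₀..τ, Real.exp (c * (s - t₀)) * (-(deriv g (u s) * (y s) ^ 2) - lam * a s)|
          ≤ ∫ s in t₀..τ, |Real.exp (c * (s - t₀)) * (-(deriv g (u s) * (y s) ^ 2) - lam * a s)| := by
            exact
              intervalIntegral.norm_integral_le_integral_norm (μ := volume) (f := fun s =>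
                Real.exp (c * (s - t₀)) * (-(deriv g (u s) * (y s) ^ 2) - lam * a s)) hτ1
        _ ≤ ∫ s in t₀..τ, (E * (D * (lam * M) ^ 2) + E * lam * |a s|) := by
            apply intervalIntegral.integral_mono_on hτ1
              (hzc.abs.intervalIntegrable _ _)
              ((continuous_const.add (continuous_const.mul ha.abs)).intervalIntegrable _ _)
            exact hptw
        _ = E * (D * (lam * M) ^ 2) * (τ - t₀) + E * lam * ∫ s in t₀..τ, |a s| := by
            rw [intervalIntegral.integral_add (f := fun _ => E * (D * (lam * M) ^ 2))
              (g := fun s => E * lam * |a s|) (intervalIntegrable_const)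
              ((continuous_const.mul ha.abs).intervalIntegrable _ _),
              intervalIntegral.integral_const, intervalIntegral.integral_const_mul]
            simp [smul_eq_mul]
            ring
        _ ≤ E * (D * (lam * M) ^ 2) * T + E * lam * Ia := by
            have hi1 : (∫ s in t₀..τ, |a s|) ≤ ∫ s in t₀..(t₀ + T), |a s| := by
              apply intervalIntegral.integral_mono_interval le_rfl hτ1 hτ.2
              · filter_upwards with x using abs_nonneg _
              · exact ha.abs.intervalIntegrable _ _
            rw [haIa] at hi1
            have hτT : τ - t₀ ≤ T := by linarith [hτ.2]
            have hc1 : (0:ℝ) ≤ E * (D * (lam * M) ^ 2) := by positivity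
            have hc2 : (0:ℝ) ≤ E * lam := by positivity
            nlinarith
        _ = E * (D * T * (lam * M) ^ 2 + lam * Ia) := by ring
    have h1 : (1:ℝ) ≤ E * Real.exp (c * (τ - t₀)) := by
      rw [hEdef, ← Real.exp_add]
      apply Real.one_le_exp
      have h2 : |c * (τ - t₀)| ≤ |c| * T := by
        rw [abs_mul]
        apply mul_le_mul_of_nonneg_left _ (abs_nonneg c)
        rw [abs_of_nonneg (by linarith)]
        linarith [hτ.2]
      have h3 := neg_abs_le (c * (τ - t₀))
      linarith
    have h4 : |y τ| ≤ E * |Real.exp (c * (τ - t₀)) * y τ| := by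
      rw [abs_mul, Real.abs_exp, ← mul_assoc]
      nlinarith [abs_nonneg (y τ)]
    calc |y τ| ≤ E * |Real.exp (c * (τ - t₀)) * y τ| := h4
      _ ≤ E * (E * (D * T * (lam * M) ^ 2 + lam * Ia)) :=
          mul_le_mul_of_nonneg_left hnorm hE0.le
      _ = E ^ 2 * (D * T * (lam * M) ^ 2 + lam * Ia) := by ring
  have hB : E ^ 2 * (D * T * (lam * M) ^ 2 + lam * Ia) < lam * M := by
    have h1 : E ^ 2 * D * T * M ^ 2 * lam < 1 / 2 := by nlinarith
    have h2 : E ^ 2 * Ia = M - 1 := by rw [hMdef]; ring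
    nlinarith
  have key : ∀ t ∈ Icc t₀ (t₀ + T), |y t| ≤ lam * M := by
    by_contra hcon
    push_neg at hcon
    obtain ⟨t₁, ht₁mem, ht₁⟩ := hcon
    set S : Set ℝ := Icc t₀ (t₀ + T) ∩ {t | lam * M ≤ |y t|} with hSdef
    have hSne : S.Nonempty := ⟨t₁, ht₁mem, ht₁.le⟩
    have hScl : IsClosed S :=
      IsClosed.inter isClosed_Icc (isClosed_le continuous_const hyc.abs)
    have hSbdd : BddBelow S := ⟨t₀, fun x hx => hx.1.1⟩
    have hτmem := hScl.csInf_mem hSne hSbdd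
    set τ := sInf S with hτdef
    have hτI : τ ∈ Icc t₀ (t₀ + T) := hτmem.1
    have hτge : lam * M ≤ |y τ| := hτmem.2
    have ht₀τ : t₀ < τ := by
      rcases lt_or_eq_of_le hτI.1 with h | h
      · exact h
      · exfalso
        rw [← h] at hτge
        rw [hyt₀, abs_zero] at hτge
        nlinarith
    have hlt : ∀ s, t₀ ≤ s → s < τ → |y s| ≤ lam * M := by
      intro s hs1 hs2
      by_contra h
      push_neg at h
      have hsS : s ∈ S := ⟨⟨hs1, le_trans hs2.le hτI.2⟩, h.le⟩
      have := csInf_le hSbdd hsS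
      linarith
    have hτle : |y τ| ≤ lam * M := by
      have htd : Tendsto (fun s => |y s|) (nhdsWithin τ (Iio τ)) (nhds |y τ|) :=
        (hyc.abs.tendsto τ).mono_left nhdsWithin_le_nhds
      refine le_of_tendsto htd ?_
      filter_upwards [Ioo_mem_nhdsLT ht₀τ] with s hs
      exact hlt s hs.1.le hs.2
    have hall : ∀ s ∈ Icc t₀ τ, |y s| ≤ lam * M := by
      intro s hs
      rcases lt_or_eq_of_le hs.2 with h | h
      · exact hlt s hs.1 h
      · rw [h]; exact hτle
    have hest := est τ hτI hall
    linarith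
  -- integral identities
  have hIcont : Continuous fun t => -(c * y t) - deriv g (u t) * (y t) ^ 2 - lam * a t :=
    ((continuous_const.mul hyc).neg.sub (hg'uc.mul (hyc.pow 2))).sub (continuous_const.mul ha)
  have I1 : (∫ t in t₀..(t₀ + T), (-(c * y t) - deriv g (u t) * (y t) ^ 2 - lam * a t)) = 0 := by
    rw [intervalIntegral.integral_eq_sub_of_hasDerivAt (fun s _ => hy' s)
      (hIcont.intervalIntegrable _ _)]
    rw [hyP t₀]; ring
  have I2 : (∫ t in t₀..(t₀ + T), y t) = 0 := by
    set H : ℝ → ℝ := fun x => ∫ s in (u t₀)..x, (g s)⁻¹ with hHdef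
    have hH : ∀ t : ℝ, HasDerivAt (fun r => H (u r)) (y t) t := by
      intro t
      have hsub : uIcc (u t₀) (u t) ⊆ Ioi (0:ℝ) := fun x hx =>
        lt_of_lt_of_le (lt_min (hupos t₀) (hupos t)) hx.1
      have hint : IntervalIntegrable (fun s => (g s)⁻¹) volume (u t₀) (u t) :=
        (ContinuousOn.inv₀ hgc.continuousOn
          (fun x hx => (hgpos x (hsub hx)).ne')).intervalIntegrable
      have hmeas : StronglyMeasurableAtFilter (fun s => (g s)⁻¹) (nhds (u t)) :=
        ⟨univ, univ_mem, ((hgc.measurable.inv).stronglyMeasurable).aestronglyMeasurable⟩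
      have hcont : ContinuousAt (fun s => (g s)⁻¹) (u t) :=
        (hgc.continuousAt).inv₀ (hgu t).ne'
      have hH1 : HasDerivAt H ((g (u t))⁻¹) (u t) :=
        intervalIntegral.integral_hasDerivAt_right hint hmeas hcont
      have hc := hH1.comp t (hud t).hasDerivAt
      refine hc.congr_deriv ?_
      simp [hydef, div_eq_mul_inv, mul_comm]
    rw [intervalIntegral.integral_eq_sub_of_hasDerivAt (fun s _ => hH s)
      (hyc.intervalIntegrable _ _), huP t₀, sub_self]
  have haInt : (∫ t in t₀..(t₀ + T), a t) = ∫ t in (0:ℝ)..T, a t := by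
    have := haP.intervalIntegral_add_eq t₀ 0
    simpa using this
  have I3 : (∫ t in t₀..(t₀ + T), deriv g (u t) * (y t) ^ 2) = lam * (-∫ t in (0:ℝ)..T, a t) := by
    have hsplit : (∫ t in t₀..(t₀ + T), (-(c * y t) - deriv g (u t) * (y t) ^ 2 - lam * a t))
        = -(c * ∫ t in t₀..(t₀ + T), y t) - (∫ t in t₀..(t₀ + T), deriv g (u t) * (y t) ^ 2)
          - lam * ∫ t in t₀..(t₀ + T), a t := by
      rw [intervalIntegral.integral_sub (f := fun t => -(c * y t) - deriv g (u t) * (y t) ^ 2)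
          (g := fun t => lam * a t) (((continuous_const.mul hyc).neg.sub
            ((hg'uc.mul (hyc.pow 2)))).intervalIntegrable _ _)
          ((continuous_const.mul ha).intervalIntegrable _ _),
        intervalIntegral.integral_sub (f := fun t => -(c * y t))
          (g := fun t => deriv g (u t) * (y t) ^ 2) ((continuous_const.mul hyc).neg.intervalIntegrable _ _)
          ((hg'uc.mul (hyc.pow 2)).intervalIntegrable _ _),
        intervalIntegral.integral_neg, intervalIntegral.integral_const_mul,
        intervalIntegral.integral_const_mul]
    rw [hsplit, I2, haInt] at I1
    linarith
  have I4 : (∫ t in t₀..(t₀ + T), deriv g (u t) * (y t) ^ 2) ≤ T * (D * (lam * M) ^ 2) := by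
    have hmono : (∫ t in t₀..(t₀ + T), deriv g (u t) * (y t) ^ 2)
        ≤ ∫ _t in t₀..(t₀ + T), D * (lam * M) ^ 2 := by
      refine intervalIntegral.integral_mono_on (by linarith)
        ((hg'uc.mul (hyc.pow 2)).intervalIntegrable _ _)
        (intervalIntegrable_const) ?_
      intro s hs
      have h1 : |deriv g (u s)| ≤ D := hD _ (hupos s).le
      have h2 : |y s| ≤ lam * M := key s hs
      have h3 : (y s) ^ 2 ≤ (lam * M) ^ 2 := by
        rw [← sq_abs (y s)]
        exact pow_le_pow_left₀ (abs_nonneg _) h2 2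
      calc deriv g (u s) * (y s) ^ 2 ≤ |deriv g (u s)| * (y s) ^ 2 := by
            exact mul_le_mul_of_nonneg_right (le_abs_self _) (sq_nonneg _)
        _ ≤ D * (lam * M) ^ 2 := by
            exact mul_le_mul h1 h3 (sq_nonneg _) hD0.le
    calc _ ≤ _ := hmono
      _ ≤ T * (D * (lam * M) ^ 2) := by
          rw [intervalIntegral.integral_const]
          simp only [smul_eq_mul, add_sub_cancel_left]
          exact le_of_eq (by ring)
  rw [I3] at I4
  nlinarith [hna, hlam, hlam2]
end

section
/- Let u be a nonnegative C^2 T-periodic solution of u'' + c u' + ϑ λ a(t) g(u) = 0 with ϑ ∈ (0,1], ‖u‖_∞ = R, and suppose |g(s)| ≤ ε s for all s ≥ R/2, where 2λεT‖a‖_{L¹} < 1 (and wlog c = 0). Then u(t) ≥ R/2 for all t. -/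
theorem stmt17 (T lam ε ϑ R : ℝ) (hT : 0 < T) (hlam : 0 < lam) (hε : 0 < ε)
    (hϑ : ϑ ∈ Set.Ioc (0:ℝ) 1) (hR : 0 < R)
    (a : ℝ → ℝ) (ha : Continuous a) (haP : Function.Periodic a T)
    (g : ℝ → ℝ) (hg : Continuous g) (hgnn : ∀ s, 0 ≤ s → 0 ≤ g s)
    (hgε : ∀ s, R / 2 ≤ s → |g s| ≤ ε * s)
    (hsmall : 2 * lam * ε * T * (∫ t in (0:ℝ)..T, |a t|) < 1)
    (u : ℝ → ℝ) (hu : ContDiff ℝ 2 u) (huP : Function.Periodic u T)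
    (hunn : ∀ t, 0 ≤ u t) (hub : ∀ t, u t ≤ R) (hattain : ∃ t, u t = R)
    (hode : ∀ t, deriv (deriv u) t + ϑ * lam * a t * g (u t) = 0) :
    ∀ t, R / 2 ≤ u t := by
  by_contra hcon
  push_neg at hcon
  obtain ⟨t1, ht1⟩ := hcon
  obtain ⟨ts, hts⟩ := hattain
  set A := ∫ t in (0:ℝ)..T, |a t| with hA
  have hAnn : 0 ≤ A := intervalIntegral.integral_nonneg hT.le (fun x _ => abs_nonneg _)
  have hcu : Continuous u := hu.continuous
  have hdu : Differentiable ℝ u := hu.differentiable two_ne_zero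
  have h2 : (1 + 1 : WithTop ℕ∞) = 2 := by norm_num
  have hu1 : ContDiff ℝ 1 (deriv u) := (contDiff_succ_iff_deriv.mp (h2 ▸ hu)).2.2
  have hdcu : Continuous (deriv u) := hu1.continuous
  have hddu : Differentiable ℝ (deriv u) := hu1.differentiable one_ne_zero
  have hcdd : Continuous (deriv (deriv u)) := by
    have : deriv (deriv u) = fun t => -(ϑ * lam * a t * g (u t)) := by
      funext t; have := hode t; linarith
    rw [this]
    exact ((((continuous_const.mul continuous_const).mul ha).mul (hg.comp hcu))).neg
  -- find a point s ≤ ts with u s = R/2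
  have hRhalf : R / 2 < R := by linarith
  obtain ⟨s0, hs0mem, hs0⟩ : ∃ s0 ∈ Set.Icc (t1 + (⌊(ts - t1)/T⌋ : ℤ) * T) ts,
      u s0 = R / 2 := by
    set t1' : ℝ := t1 + (⌊(ts - t1)/T⌋ : ℤ) * T with ht1'
    have hle : t1' ≤ ts := by
      have h := mul_le_mul_of_nonneg_right (Int.floor_le ((ts - t1)/T)) hT.le
      rw [div_mul_cancel₀ _ hT.ne'] at h
      simp only [ht1']
      linarith
    have hut1' : u t1' = u t1 := huP.int_mul (⌊(ts - t1)/T⌋) t1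
    have hlt' : u t1' < R / 2 := by rw [hut1']; exact ht1
    have hsub := intermediate_value_Icc hle (hcu.continuousOn (s := Set.Icc t1' ts))
    have hmem : R / 2 ∈ Set.Icc (u t1') (u ts) := ⟨hlt'.le, by rw [hts]; linarith⟩
    obtain ⟨s0, hs01, hs02⟩ := hsub hmem
    exact ⟨s0, hs01, hs02⟩
  -- the set of crossing times
  set S : Set ℝ := {t | t ≤ ts ∧ u t = R / 2} with hS
  have hSc : IsClosed S := by
    have : S = Set.Iic ts ∩ u ⁻¹' {R / 2} := by ext x; simp [hS, Set.mem_setOf_eq]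
    rw [this]
    exact isClosed_Iic.inter (isClosed_singleton.preimage hcu)
  have hSne : S.Nonempty := ⟨s0, hs0mem.2, hs0⟩
  have hSbdd : BddAbove S := ⟨ts, fun x hx => hx.1⟩
  set α := sSup S with hα
  have hαS : α ∈ S := hSc.csSup_mem hSne hSbdd
  have hαle : α ≤ ts := hαS.1
  have huα : u α = R / 2 := hαS.2
  have hαlt : α < ts := by
    rcases lt_or_eq_of_le hαle with h | h
    · exact h
    · exfalso; rw [h, hts] at huα; linarith
  -- u ≥ R/2 on [α, ts]
  have hge : ∀ t ∈ Set.Icc α ts, R / 2 ≤ u t := by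
    intro t ht
    by_contra hlt
    push_neg at hlt
    have htne : t ≠ ts := fun h => by rw [h, hts] at hlt; linarith
    have hts' : t < ts := lt_of_le_of_ne ht.2 htne
    have hαt : α < t := by
      rcases lt_or_eq_of_le ht.1 with h | h
      · exact h
      · exfalso; rw [← h, huα] at hlt; linarith
    obtain ⟨s', hs'mem, hs'⟩ : ∃ s' ∈ Set.Icc t ts, u s' = R / 2 := by
      have := intermediate_value_Icc hts'.le (hcu.continuousOn (s := Set.Icc t ts))
      have hmem : R / 2 ∈ Set.Icc (u t) (u ts) := ⟨hlt.le, by rw [hts]; linarith⟩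
      obtain ⟨s', hs'1, hs'2⟩ := this hmem
      exact ⟨s', hs'1, hs'2⟩
    have : s' ≤ α := le_csSup hSbdd ⟨hs'mem.2, hs'⟩
    linarith [hs'mem.1]
  -- ts - α ≤ T
  have hTle : ts - α ≤ T := by
    by_contra h
    push_neg at h
    set n : ℤ := ⌊(α - t1)/T⌋ + 1 with hn
    have h1 : α < t1 + (n : ℝ) * T := by
      have := Int.lt_floor_add_one ((α - t1)/T)
      have : (α - t1)/T < (n : ℝ) := by push_cast [hn]; linarith [Int.lt_floor_add_one ((α - t1)/T)]
      have := (div_lt_iff₀ hT).mp this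
      linarith
    have h2' : t1 + (n : ℝ) * T < ts := by
      have hfl : (⌊(α - t1)/T⌋ : ℝ) ≤ (α - t1)/T := Int.floor_le _
      have : (n : ℝ) ≤ (α - t1)/T + 1 := by push_cast [hn]; linarith
      have : (n : ℝ) * T ≤ ((α - t1)/T + 1) * T := by
        exact mul_le_mul_of_nonneg_right this hT.le
      have hdiv : ((α - t1)/T) * T = α - t1 := div_mul_cancel₀ _ hT.ne'
      nlinarith
    have hup : u (t1 + (n : ℝ) * T) = u t1 := huP.int_mul n t1
    have := hge (t1 + (n : ℝ) * T) ⟨h1.le, h2'.le⟩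
    rw [hup] at this
    linarith
  -- deriv u ts = 0
  have hdts : deriv u ts = 0 := by
    have hmax : IsLocalMax u ts :=
      Filter.Eventually.of_forall fun t => by rw [hts]; exact hub t
    exact hmax.deriv_eq_zero
  set C := lam * (ε * R) with hC
  have hCnn : 0 ≤ C := by positivity
  -- pointwise bound on deriv u
  have key : ∀ t ∈ Set.Icc α ts, deriv u t ≤ C * A := by
    intro t ht
    have hftc : ∫ x in t..ts, deriv (deriv u) x = deriv u ts - deriv u t :=
      intervalIntegral.integral_deriv_eq_sub (fun x _ => hddu x)
        (hcdd.intervalIntegrable _ _)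
    have h1 : |deriv u t| = |∫ x in t..ts, deriv (deriv u) x| := by
      rw [hftc, hdts, zero_sub, abs_neg]
    have h2'' : |∫ x in t..ts, deriv (deriv u) x| ≤ ∫ x in t..ts, |deriv (deriv u) x| :=
      intervalIntegral.abs_integral_le_integral_abs ht.2
    have h3 : ∫ x in t..ts, |deriv (deriv u) x| ≤ ∫ x in t..ts, C * |a x| := by
      apply intervalIntegral.integral_mono_on ht.2 (hcdd.abs.intervalIntegrable _ _)
        ((continuous_const.mul ha.abs).intervalIntegrable _ _)
      intro x hx
      have hux : R / 2 ≤ u x := hge x ⟨le_trans ht.1 hx.1, hx.2⟩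
      have e1 : deriv (deriv u) x = -(ϑ * lam * a x * g (u x)) := by
        have := hode x; linarith
      have hg1 : |g (u x)| ≤ ε * R :=
        le_trans (hgε _ hux) (mul_le_mul_of_nonneg_left (hub x) hε.le)
      rw [e1, abs_neg, abs_mul, abs_mul, abs_mul, abs_of_pos hϑ.1, abs_of_pos hlam]
      calc ϑ * lam * |a x| * |g (u x)| ≤ 1 * lam * |a x| * (ε * R) := by
            have h0 := abs_nonneg (a x)
            have h0' := abs_nonneg (g (u x))
            nlinarith [hϑ.1.le, hϑ.2, hlam.le, hg1,
              mul_nonneg (mul_nonneg hlam.le h0) h0',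
              mul_nonneg hlam.le h0]
        _ = C * |a x| := by ring
    have h4 : ∫ x in t..ts, C * |a x| ≤ ∫ x in α..ts, C * |a x| := by
      apply intervalIntegral.integral_mono_interval ht.1 ht.2 le_rfl
      · exact Filter.Eventually.of_forall fun x => mul_nonneg hCnn (abs_nonneg _)
      · exact (continuous_const.mul ha.abs).intervalIntegrable _ _
    have h6 : ∫ x in α..ts, C * |a x| ≤ ∫ x in α..(α + T), C * |a x| := by
      apply intervalIntegral.integral_mono_interval le_rfl hαle (by linarith)
      · exact Filter.Eventually.of_forall fun x => mul_nonneg hCnn (abs_nonneg _)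
      · exact (continuous_const.mul ha.abs).intervalIntegrable _ _
    have h7 : ∫ x in α..(α + T), C * |a x| = C * A := by
      have hPabs : Function.Periodic (fun t => C * |a t|) T := by
        intro x; simp [haP x]
      have := hPabs.intervalIntegral_add_eq α 0
      rw [this, zero_add, hA, intervalIntegral.integral_const_mul]
    calc deriv u t ≤ |deriv u t| := le_abs_self _
      _ = |∫ x in t..ts, deriv (deriv u) x| := h1
      _ ≤ ∫ x in t..ts, |deriv (deriv u) x| := h2''
      _ ≤ ∫ x in t..ts, C * |a x| := h3
      _ ≤ ∫ x in α..ts, C * |a x| := h4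
      _ ≤ ∫ x in α..(α + T), C * |a x| := h6
      _ = C * A := h7
  -- integrate deriv u over [α, ts]
  have hftc2 : ∫ t in α..ts, deriv u t = u ts - u α :=
    intervalIntegral.integral_deriv_eq_sub (fun x _ => hdu x)
      (hdcu.intervalIntegrable _ _)
  have hmono : ∫ t in α..ts, deriv u t ≤ ∫ t in α..ts, C * A :=
    intervalIntegral.integral_mono_on hαle (hdcu.intervalIntegrable _ _)
      intervalIntegrable_const key
  have hconst : ∫ t in α..ts, (C * A : ℝ) = (ts - α) * (C * A) := by
    rw [intervalIntegral.integral_const]; simp [smul_eq_mul]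
  rw [hftc2, hconst, hts, huα] at hmono
  have hfin : R / 2 ≤ T * (C * A) := by
    have hCA : 0 ≤ C * A := mul_nonneg hCnn hAnn
    nlinarith
  rw [hC] at hfin
  nlinarith [mul_pos hR (sub_pos.mpr hsmall)]
end
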